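/- arXiv:1812.10589 — 7 statements merged into one kernel-verified Lean document; each statement's English description precedes it below -/
import Mathlib

section
/- If the function f belongs to the class Σ'(x) and b x²(3b − 4p) − 4 a q ≠ 0, then the second Taylor–Maclaurin coefficient of f satisfies |a₂| ≤ (|b x| · √|b x|) / √|b x²(3b − 4p) − 4 a q|. -/
open Metric Complex NNReal

lemma coeff2_bound {Φ : ℂ → ℂ} (hΦ : AnalyticOnNhd ℂ Φ (ball 0 1))
    (hlt : ∀ z ∈ ball (0:ℂ) 1, ‖Φ z‖ < 1) :
    ‖deriv (deriv Φ) 0‖ ≤ 2 := by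
  have hiter : deriv (deriv Φ) 0 = iteratedDeriv 2 Φ 0 := by
    rw [iteratedDeriv_succ, iteratedDeriv_one]
  rw [hiter]
  have key : ∀ r : ℝ≥0, 0 < r → (r:ℝ) < 1 → ‖iteratedDeriv 2 Φ 0‖ ≤ 2 / (r:ℝ)^2 := by
    intro r hr0 hr1
    have hcm : ∀ θ : ℝ, circleMap 0 (r:ℝ) θ ∈ ball (0:ℂ) 1 := by
      intro θ
      have := circleMap_mem_sphere (0:ℂ) r.coe_nonneg θ
      rw [mem_sphere] at this
      rw [mem_ball, this]
      exact hr1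
    have hsub : closedBall (0:ℂ) r ⊆ ball 0 1 := by
      intro z hz
      rw [mem_closedBall] at hz
      rw [mem_ball]
      exact lt_of_le_of_lt hz hr1
    have hd : DifferentiableOn ℂ Φ (closedBall (0:ℂ) r) :=
      (hΦ.mono hsub).differentiableOn
    have hps := hd.hasFPowerSeriesOnBall hr0
    have hfact := hps.factorial_smul (y := (1:ℂ)) 2
    have h1 : iteratedDeriv 2 Φ 0 = iteratedFDeriv ℂ 2 Φ 0 (fun _ => 1) :=
      iteratedDeriv_eq_iteratedFDeriv
    have hnorm : ‖cauchyPowerSeries Φ 0 r 2‖ ≤ 1 / (r:ℝ)^2 := by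
      have hint : (∫ θ : ℝ in (0)..2 * Real.pi, ‖Φ (circleMap 0 r θ)‖) ≤ 2 * Real.pi := by
        have hcont : Continuous fun θ : ℝ => ‖Φ (circleMap 0 (r:ℝ) θ)‖ := by
          apply Continuous.norm
          rw [continuous_iff_continuousAt]
          intro θ
          exact ((hΦ _ (hcm θ)).continuousAt).comp (continuous_circleMap 0 (r:ℝ)).continuousAt
        calc (∫ θ : ℝ in (0)..2 * Real.pi, ‖Φ (circleMap 0 (r:ℝ) θ)‖)
            ≤ ∫ _ : ℝ in (0)..2 * Real.pi, (1:ℝ) := by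
              apply intervalIntegral.integral_mono_on Real.two_pi_pos.le
                (hcont.intervalIntegrable _ _) (intervalIntegrable_const)
              intro θ _
              exact (hlt _ (hcm θ)).le
          _ = 2 * Real.pi := by simp
      calc ‖cauchyPowerSeries Φ 0 r 2‖
          ≤ ((2 * Real.pi)⁻¹ * ∫ θ : ℝ in (0)..2 * Real.pi, ‖Φ (circleMap 0 (r:ℝ) θ)‖) * |(r:ℝ)|⁻¹ ^ 2 :=
            norm_cauchyPowerSeries_le Φ 0 r 2
        _ ≤ ((2 * Real.pi)⁻¹ * (2 * Real.pi)) * |(r:ℝ)|⁻¹ ^ 2 := by gcongr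
        _ = 1 / (r:ℝ)^2 := by
            rw [inv_mul_cancel₀ Real.two_pi_pos.ne', _root_.abs_of_nonneg r.coe_nonneg,
              one_mul, inv_pow, one_div]
    calc ‖iteratedDeriv 2 Φ 0‖ = ‖Nat.factorial 2 • (cauchyPowerSeries Φ 0 r 2 fun _ => (1:ℂ))‖ := by
          rw [h1, ← hfact]
      _ = 2 * ‖cauchyPowerSeries Φ 0 r 2 fun _ => (1:ℂ)‖ := by
          rw [nsmul_eq_mul]
          norm_num [Nat.factorial]
      _ ≤ 2 * ‖cauchyPowerSeries Φ 0 r 2‖ := by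
          gcongr
          calc ‖cauchyPowerSeries Φ 0 r 2 fun _ => (1:ℂ)‖
              ≤ ‖cauchyPowerSeries Φ 0 r 2‖ * ∏ _i : Fin 2, ‖(1:ℂ)‖ :=
                (cauchyPowerSeries Φ 0 r 2).le_opNorm _
            _ = ‖cauchyPowerSeries Φ 0 r 2‖ := by simp
      _ ≤ 2 * (1 / (r:ℝ)^2) := by gcongr
      _ = 2 / (r:ℝ)^2 := by ring
  have hev : ∀ᶠ r : ℝ in nhdsWithin 1 (Set.Iio 1), ‖iteratedDeriv 2 Φ 0‖ ≤ 2 / r^2 := by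
    filter_upwards [Ioo_mem_nhdsLT_of_mem (by norm_num : (1:ℝ) ∈ Set.Ioc (1/2) 1)] with r hr
    exact key ⟨r, by linarith [hr.1]⟩ (by exact_mod_cast (by linarith [hr.1] : (0:ℝ) < r)) hr.2
  have htend : Filter.Tendsto (fun r : ℝ => 2 / r^2) (nhdsWithin 1 (Set.Iio 1)) (nhds 2) := by
    have h2 : Filter.Tendsto (fun r : ℝ => 2 / r^2) (nhds 1) (nhds (2 / 1^2)) := by
      exact (Filter.Tendsto.div tendsto_const_nhds ((continuous_pow 2).tendsto 1) (by norm_num))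
    simpa using h2.mono_left nhdsWithin_le_nhds
  exact ge_of_tendsto htend hev

lemma horadam_derivs (m₁ m₂ c₁ c₂ : ℂ) {F U : ℂ → ℂ}
    (hF : AnalyticOnNhd ℂ F (ball 0 1)) (hU : AnalyticOnNhd ℂ U (ball 0 1)) (hU0 : U 0 = 0)
    (hid : ∀ z ∈ ball (0:ℂ) 1, F z = 1 + m₁ * U z + m₂ * (U z)^2
        + F z * (c₁ * U z + c₂ * (U z)^2)) :
    deriv F 0 = (m₁ + c₁) * deriv U 0 ∧
    deriv (deriv F) 0 = (m₁ + c₁) * deriv (deriv U) 0 +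
      (2*m₂ + 2*c₂ + 2*c₁*(m₁+c₁)) * (deriv U 0)^2 := by
  have h0 : (0:ℂ) ∈ ball (0:ℂ) 1 := by simp
  have hF0 : F 0 = 1 := by have := hid 0 h0; simpa [hU0] using this
  have hevB : ∀ᶠ z in nhds (0:ℂ), z ∈ ball (0:ℂ) 1 := isOpen_ball.mem_nhds h0
  -- first derivative formula, eventually
  have hD1 : ∀ᶠ z in nhds (0:ℂ), deriv F z =
      m₁ * deriv U z + m₂ * (2 * U z * deriv U z)
      + (deriv F z * (c₁ * U z + c₂ * (U z)^2)
         + F z * (c₁ * deriv U z + c₂ * (2 * U z * deriv U z))) := by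
    filter_upwards [hevB] with z hz
    have hUz : HasDerivAt U (deriv U z) z := ((hU z hz).differentiableAt).hasDerivAt
    have hFz : HasDerivAt F (deriv F z) z := ((hF z hz).differentiableAt).hasDerivAt
    have e2 : HasDerivAt (fun w => (U w)^2) (2 * U z * deriv U z) z := by
      have := hUz.fun_pow 2
      norm_num at this
      convert this using 1
    have e4 : HasDerivAt (fun w => c₁ * U w + c₂ * (U w)^2)
        (c₁ * deriv U z + c₂ * (2 * U z * deriv U z)) z :=
      (hUz.const_mul c₁).add (e2.const_mul c₂)
    have e5 : HasDerivAt (fun w => F w * (c₁ * U w + c₂ * (U w)^2))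
        (deriv F z * (c₁ * U z + c₂ * (U z)^2)
         + F z * (c₁ * deriv U z + c₂ * (2 * U z * deriv U z))) z := hFz.mul e4
    have hR : HasDerivAt (fun w => 1 + m₁ * U w + m₂ * (U w)^2
        + F w * (c₁ * U w + c₂ * (U w)^2))
        (m₁ * deriv U z + m₂ * (2 * U z * deriv U z)
          + (deriv F z * (c₁ * U z + c₂ * (U z)^2)
            + F z * (c₁ * deriv U z + c₂ * (2 * U z * deriv U z)))) z := by
      have := (((hUz.const_mul m₁).const_add 1).fun_add (e2.const_mul m₂)).fun_add e5
      convert this using 1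
    have hcongr : F =ᶠ[nhds z] (fun w => 1 + m₁ * U w + m₂ * (U w)^2
        + F w * (c₁ * U w + c₂ * (U w)^2)) := by
      filter_upwards [isOpen_ball.mem_nhds hz] with w hw
      exact hid w hw
    exact (hR.congr_of_eventuallyEq hcongr).deriv
  have h1 : deriv F 0 = (m₁ + c₁) * deriv U 0 := by
    have := hD1.self_of_nhds
    rw [hU0, hF0] at this
    rw [this]; ring
  refine ⟨h1, ?_⟩
  -- second derivative: differentiate the eventual identity hD1 at 0
  have hDF : deriv (deriv F) 0 = deriv (fun z =>
      m₁ * deriv U z + m₂ * (2 * U z * deriv U z)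
      + (deriv F z * (c₁ * U z + c₂ * (U z)^2)
         + F z * (c₁ * deriv U z + c₂ * (2 * U z * deriv U z)))) 0 :=
    Filter.EventuallyEq.deriv_eq hD1
  have hU0d : HasDerivAt U (deriv U 0) 0 := ((hU 0 h0).differentiableAt).hasDerivAt
  have hU1d : HasDerivAt (deriv U) (deriv (deriv U) 0) 0 :=
    ((hU.deriv 0 h0).differentiableAt).hasDerivAt
  have hF0d : HasDerivAt F (deriv F 0) 0 := ((hF 0 h0).differentiableAt).hasDerivAt
  have hF1d : HasDerivAt (deriv F) (deriv (deriv F) 0) 0 :=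
    ((hF.deriv 0 h0).differentiableAt).hasDerivAt
  set u1 := deriv U 0
  set u2 := deriv (deriv U) 0
  set f1 := deriv F 0
  set f2 := deriv (deriv F) 0
  -- build HasDerivAt for the big RHS at 0
  have e2 : HasDerivAt (fun w => (U w)^2) (2 * U 0 * u1) 0 := by
    have := hU0d.fun_pow 2
    norm_num at this
    convert this using 1
  have eUU' : HasDerivAt (fun w => 2 * U w * deriv U w)
      (2 * u1 * deriv U 0 + 2 * U 0 * u2) 0 := (hU0d.const_mul 2).mul hU1d
  have t1 : HasDerivAt (fun w => m₁ * deriv U w) (m₁ * u2) 0 := hU1d.const_mul m₁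
  have t2 : HasDerivAt (fun w => m₂ * (2 * U w * deriv U w))
      (m₂ * (2 * u1 * deriv U 0 + 2 * U 0 * u2)) 0 := eUU'.const_mul m₂
  have t3inner : HasDerivAt (fun w => c₁ * U w + c₂ * (U w)^2)
      (c₁ * u1 + c₂ * (2 * U 0 * u1)) 0 := (hU0d.const_mul c₁).add (e2.const_mul c₂)
  have t3 : HasDerivAt (fun w => deriv F w * (c₁ * U w + c₂ * (U w)^2))
      (f2 * (c₁ * U 0 + c₂ * (U 0)^2) + f1 * (c₁ * u1 + c₂ * (2 * U 0 * u1))) 0 :=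
    hF1d.mul t3inner
  have t4inner : HasDerivAt (fun w => c₁ * deriv U w + c₂ * (2 * U w * deriv U w))
      (c₁ * u2 + c₂ * (2 * u1 * deriv U 0 + 2 * U 0 * u2)) 0 :=
    (hU1d.const_mul c₁).add (eUU'.const_mul c₂)
  have t4 : HasDerivAt (fun w => F w * (c₁ * deriv U w + c₂ * (2 * U w * deriv U w)))
      (f1 * (c₁ * u1 + c₂ * (2 * U 0 * u1))
        + F 0 * (c₁ * u2 + c₂ * (2 * u1 * deriv U 0 + 2 * U 0 * u2))) 0 := hF0d.mul t4inner
  have hbig := (t1.fun_add t2).fun_add (t3.fun_add t4)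
  have hval := hbig.deriv
  rw [← hDF] at hval
  rw [hval, hU0, hF0, h1]
  ring

lemma inverse_derivs {f g : ℂ → ℂ}
    (hf : AnalyticOnNhd ℂ f (ball 0 1)) (hg : AnalyticOnNhd ℂ g (ball 0 1))
    (hf0 : f 0 = 0) (hf1 : deriv f 0 = 1)
    (hgf : ∀ᶠ z in nhds (0:ℂ), g (f z) = z) :
    deriv g 0 = 1 ∧ deriv (deriv g) 0 = - deriv (deriv f) 0 ∧
    deriv (deriv (deriv g)) 0 = 3 * (deriv (deriv f) 0)^2 - deriv (deriv (deriv f)) 0 := by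
  have h0 : (0:ℂ) ∈ ball (0:ℂ) 1 := by simp
  have hevB : ∀ᶠ z in nhds (0:ℂ), z ∈ ball (0:ℂ) 1 := isOpen_ball.mem_nhds h0
  have hfball : ∀ᶠ z in nhds (0:ℂ), f z ∈ ball (0:ℂ) 1 :=
    ((hf 0 h0).continuousAt).eventually_mem (by rw [hf0]; exact isOpen_ball.mem_nhds h0)
  -- E1 : (deriv g ∘ f) * deriv f = 1 eventually
  have E1 : ∀ᶠ z in nhds (0:ℂ), deriv g (f z) * deriv f z = 1 := by
    have hid : (fun z => g (f z)) =ᶠ[nhds (0:ℂ)] id := hgf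
    have hd := hid.deriv
    filter_upwards [hd.eventuallyEq_nhds.self_of_nhds, hevB, hfball] with z h1 h2 h3
    have hfz : HasDerivAt f (deriv f z) z := ((hf z h2).differentiableAt).hasDerivAt
    have hgz : HasDerivAt g (deriv g (f z)) (f z) := ((hg _ h3).differentiableAt).hasDerivAt
    have hcomp : HasDerivAt (fun z => g (f z)) (deriv g (f z) * deriv f z) z := hgz.comp z hfz
    rw [← hcomp.deriv, h1, deriv_id]
  have hg1 : deriv g 0 = 1 := by
    have := E1.self_of_nhds
    rwa [hf0, hf1, mul_one] at this
  -- E2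
  have E2 : ∀ᶠ z in nhds (0:ℂ), deriv (deriv g) (f z) * deriv f z * deriv f z
      + deriv g (f z) * deriv (deriv f) z = 0 := by
    have hE1' : (fun z => deriv g (f z) * deriv f z) =ᶠ[nhds (0:ℂ)] (fun _ => 1) := E1
    have hd := hE1'.deriv
    filter_upwards [hd.eventuallyEq_nhds.self_of_nhds, hevB, hfball] with z h1 h2 h3
    have hfz : HasDerivAt f (deriv f z) z := ((hf z h2).differentiableAt).hasDerivAt
    have hf2z : HasDerivAt (deriv f) (deriv (deriv f) z) z :=
      ((hf.deriv z h2).differentiableAt).hasDerivAt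
    have hg1z : HasDerivAt (deriv g) (deriv (deriv g) (f z)) (f z) :=
      ((hg.deriv _ h3).differentiableAt).hasDerivAt
    have hc : HasDerivAt (fun z => deriv g (f z)) (deriv (deriv g) (f z) * deriv f z) z :=
      hg1z.comp z hfz
    have hprod : HasDerivAt (fun z => deriv g (f z) * deriv f z)
        (deriv (deriv g) (f z) * deriv f z * deriv f z + deriv g (f z) * deriv (deriv f) z) z :=
      hc.mul hf2z
    rw [← hprod.deriv, h1, deriv_const]
  have hg2 : deriv (deriv g) 0 = - deriv (deriv f) 0 := by
    have := E2.self_of_nhds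
    rw [hf0, hf1] at this
    rw [hg1] at this
    linear_combination this
  refine ⟨hg1, hg2, ?_⟩
  -- E3 : differentiate E2 at 0
  have hE2' : (fun z => deriv (deriv g) (f z) * deriv f z * deriv f z
      + deriv g (f z) * deriv (deriv f) z) =ᶠ[nhds (0:ℂ)] (fun _ => 0) := E2
  have hD := hE2'.deriv_eq
  rw [deriv_const] at hD
  -- build HasDerivAt of the big function at 0
  have hf0d : HasDerivAt f (deriv f 0) 0 := ((hf 0 h0).differentiableAt).hasDerivAt
  have hf2d : HasDerivAt (deriv f) (deriv (deriv f) 0) 0 :=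
    ((hf.deriv 0 h0).differentiableAt).hasDerivAt
  have hf3d : HasDerivAt (deriv (deriv f)) (deriv (deriv (deriv f)) 0) 0 :=
    ((hf.deriv.deriv 0 h0).differentiableAt).hasDerivAt
  have hg1at : HasDerivAt (deriv g) (deriv (deriv g) (f 0)) (f 0) := by
    rw [hf0]; exact ((hg.deriv 0 h0).differentiableAt).hasDerivAt
  have hg2at : HasDerivAt (deriv (deriv g)) (deriv (deriv (deriv g)) (f 0)) (f 0) := by
    rw [hf0]; exact ((hg.deriv.deriv 0 h0).differentiableAt).hasDerivAt
  have hc1 : HasDerivAt (fun z => deriv g (f z)) (deriv (deriv g) (f 0) * deriv f 0) 0 :=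
    hg1at.comp 0 hf0d
  have hc2 : HasDerivAt (fun z => deriv (deriv g) (f z))
      (deriv (deriv (deriv g)) (f 0) * deriv f 0) 0 := hg2at.comp 0 hf0d
  have hbig := ((hc2.fun_mul hf2d).fun_mul hf2d).fun_add (hc1.fun_mul hf3d)
  have hval := hbig.deriv
  rw [hD] at hval
  rw [hf0, hf1, hg1, hg2] at hval
  -- hval : 0 = ...
  linear_combination -hval

/-- **Theorem 2.2, bound (8).** If `f` belongs to the class `Σ'(x)` (defined via the
Horadam generating function `Ω(x,z) = (a + (b - a p) x z)/(1 - p x z - q z²)`) and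
`b x² (3 b - 4 p) - 4 a q ≠ 0`, then the second Taylor–Maclaurin coefficient
`a₂ = f''(0)/2` satisfies `|a₂| ≤ |b x| √|b x| / √|b x² (3 b - 4 p) - 4 a q|`. -/
theorem abs_a2_le_of_mem_SigmaPrime
    (a b p q x : ℝ) (f g Φ Ψ : ℂ → ℂ)
    (hf : AnalyticOnNhd ℂ f (ball 0 1)) (hfinj : Set.InjOn f (ball 0 1))
    (hf0 : f 0 = 0) (hf1 : deriv f 0 = 1)
    (hg : AnalyticOnNhd ℂ g (ball 0 1)) (hginj : Set.InjOn g (ball 0 1))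
    (hg0 : g 0 = 0)
    (hgf : ∀ᶠ z in nhds (0 : ℂ), g (f z) = z)
    (hfg : ∀ᶠ w in nhds (0 : ℂ), f (g w) = w)
    (hΦ : AnalyticOnNhd ℂ Φ (ball 0 1)) (hΦ0 : Φ 0 = 0)
    (hΦlt : ∀ z ∈ ball (0 : ℂ) 1, ‖Φ z‖ < 1)
    (hΨ : AnalyticOnNhd ℂ Ψ (ball 0 1)) (hΨ0 : Ψ 0 = 0)
    (hΨlt : ∀ w ∈ ball (0 : ℂ) 1, ‖Ψ w‖ < 1)
    (hΦden : ∀ z ∈ ball (0 : ℂ) 1,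
      (1 : ℂ) - (p : ℂ) * (x : ℂ) * Φ z - (q : ℂ) * (Φ z) ^ 2 ≠ 0)
    (hΨden : ∀ w ∈ ball (0 : ℂ) 1,
      (1 : ℂ) - (p : ℂ) * (x : ℂ) * Ψ w - (q : ℂ) * (Ψ w) ^ 2 ≠ 0)
    (hfeq : ∀ z ∈ ball (0 : ℂ) 1,
      deriv f z = ((a : ℂ) + ((b : ℂ) - (a : ℂ) * (p : ℂ)) * (x : ℂ) * Φ z) /
          ((1 : ℂ) - (p : ℂ) * (x : ℂ) * Φ z - (q : ℂ) * (Φ z) ^ 2) + 1 - (a : ℂ))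
    (hgeq : ∀ w ∈ ball (0 : ℂ) 1,
      deriv g w = ((a : ℂ) + ((b : ℂ) - (a : ℂ) * (p : ℂ)) * (x : ℂ) * Ψ w) /
          ((1 : ℂ) - (p : ℂ) * (x : ℂ) * Ψ w - (q : ℂ) * (Ψ w) ^ 2) + 1 - (a : ℂ))
    (hne : b * x ^ 2 * (3 * b - 4 * p) - 4 * a * q ≠ 0) :
    ‖iteratedDeriv 2 f 0 / 2‖ ≤
      (|b * x| * Real.sqrt |b * x|) / Real.sqrt |b * x ^ 2 * (3 * b - 4 * p) - 4 * a * q| := by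
  set A : ℂ := (a : ℂ)
  set B : ℂ := (b : ℂ)
  set P : ℂ := (p : ℂ)
  set Q : ℂ := (q : ℂ)
  set X : ℂ := (x : ℂ)
  set m₁ : ℂ := (B - A * P) * X - (1 - A) * (P * X) with hm₁
  set m₂ : ℂ := -(1 - A) * Q with hm₂
  -- identity for f
  have hidΦ : ∀ z ∈ ball (0:ℂ) 1, deriv f z = 1 + m₁ * Φ z + m₂ * (Φ z)^2
      + deriv f z * ((P*X) * Φ z + Q * (Φ z)^2) := by
    intro z hz
    have hD := hΦden z hz
    rw [hfeq z hz, hm₁, hm₂]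
    linear_combination (A + (B - A * P) * X * Φ z) * mul_inv_cancel₀ hD
  have hidΨ : ∀ z ∈ ball (0:ℂ) 1, deriv g z = 1 + m₁ * Ψ z + m₂ * (Ψ z)^2
      + deriv g z * ((P*X) * Ψ z + Q * (Ψ z)^2) := by
    intro z hz
    have hD := hΨden z hz
    rw [hgeq z hz, hm₁, hm₂]
    linear_combination (A + (B - A * P) * X * Ψ z) * mul_inv_cancel₀ hD
  obtain ⟨hfd1, hfd2⟩ := horadam_derivs m₁ m₂ (P*X) Q hf.deriv hΦ hΦ0 hidΦ
  obtain ⟨hgd1, hgd2⟩ := horadam_derivs m₁ m₂ (P*X) Q hg.deriv hΨ hΨ0 hidΨ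
  obtain ⟨hG1, hG2, hG3⟩ := inverse_derivs hf hg hf0 hf1 hgf
  set φ1 := deriv Φ 0
  set φ2 := deriv (deriv Φ) 0
  set ψ1 := deriv Ψ 0
  set ψ2 := deriv (deriv Ψ) 0
  set f2 := deriv (deriv f) 0
  set f3 := deriv (deriv (deriv f)) 0
  set g2 := deriv (deriv g) 0
  set g3 := deriv (deriv (deriv g)) 0
  have hm : m₁ + P*X = B*X := by rw [hm₁]; ring
  rw [hm] at hfd1 hgd1 hfd2 hgd2
  set H : ℂ := 2*m₂ + 2*Q + 2*(P*X)*(B*X) with hH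
  -- key algebraic identity
  have hkey : f2^2 * (3*(B*X)^2 - 2*H) = (B*X)^3 * (φ2 + ψ2) := by
    linear_combination (B*X)^2 * hfd2 + (B*X)^2 * hgd2 - (B*X)^2 * hG3
      - H*(f2 + B*X*φ1) * hfd1 - H*(g2 + B*X*ψ1) * hgd1 + H*(g2 - f2) * hG2
  -- rewrite the coefficient as the cast of the real discriminant
  set Dr : ℝ := b * x ^ 2 * (3 * b - 4 * p) - 4 * a * q with hDr
  have hcast : 3*(B*X)^2 - 2*H = (Dr : ℂ) := by
    rw [hH, hm₂, hDr]
    push_cast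
    ring
  rw [hcast] at hkey
  -- norms
  have hφ2 : ‖φ2‖ ≤ 2 := coeff2_bound hΦ hΦlt
  have hψ2 : ‖ψ2‖ ≤ 2 := coeff2_bound hΨ hΨlt
  have habs : (‖f2‖)^2 * |Dr| ≤ ‖B*X‖ ^ 3 * 4 := by
    have h1 : ‖f2^2 * (Dr:ℂ)‖ = (‖f2‖)^2 * |Dr| := by
      rw [norm_mul, norm_pow, Complex.norm_real, Real.norm_eq_abs]
    have h2 : ‖(B*X)^3 * (φ2 + ψ2)‖ ≤ ‖B*X‖ ^ 3 * 4 := by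
      rw [norm_mul, norm_pow]
      gcongr
      calc ‖φ2 + ψ2‖ ≤ ‖φ2‖ + ‖ψ2‖ := norm_add_le _ _
        _ ≤ 4 := by linarith
    calc (‖f2‖)^2 * |Dr| = ‖f2^2 * (Dr:ℂ)‖ := h1.symm
      _ = ‖(B*X)^3 * (φ2 + ψ2)‖ := by rw [hkey]
      _ ≤ ‖B*X‖ ^ 3 * 4 := h2
  have hBX : ‖B*X‖ = |b*x| := by
    have : B * X = ((b*x : ℝ) : ℂ) := by push_cast; ring
    rw [this, Complex.norm_real, Real.norm_eq_abs]
  rw [hBX] at habs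
  -- finish
  have hit : iteratedDeriv 2 f 0 = f2 := by
    rw [iteratedDeriv_succ, iteratedDeriv_one]
  rw [hit, norm_div]
  have habs2 : ‖(2:ℂ)‖ = 2 := by norm_num
  rw [habs2]
  set t : ℝ := ‖f2‖
  set m : ℝ := |b*x|
  have hd : (0:ℝ) < |Dr| := abs_pos.mpr hne
  have ht : 0 ≤ t := norm_nonneg _
  have hm0 : 0 ≤ m := abs_nonneg _
  have step1 : (t/2)^2 ≤ m^3 / |Dr| := by
    rw [div_pow, div_le_div_iff₀ (by positivity) hd]
    nlinarith [habs]
  have step2 : t/2 ≤ Real.sqrt (m^3 / |Dr|) :=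
    (Real.le_sqrt (div_nonneg ht (by norm_num)) (by positivity)).mpr step1
  have step3 : Real.sqrt (m^3 / |Dr|) = m * Real.sqrt m / Real.sqrt |Dr| := by
    rw [Real.sqrt_div (by positivity) _]
    congr 1
    rw [show m^3 = m^2 * m by ring, Real.sqrt_mul (sq_nonneg m), Real.sqrt_sq hm0]
  rw [← step3]
  exact step2
end

section
/- Let t be a real number with 1/2 < t < 1. If the function f belongs to the class Σ'(t), then the second Taylor–Maclaurin coefficient of f satisfies |a₂| ≤ t√(2t) / √(1 − t²). -/
open Metric
open scoped NNReal



set_option maxHeartbeats 1000000 in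
lemma cauchy_second (Φ : ℂ → ℂ) (hΦ : DifferentiableOn ℂ Φ (ball 0 1))
    (hlt : ∀ z ∈ ball (0:ℂ) 1, ‖Φ z‖ ≤ 1) :
    ‖deriv (deriv Φ) 0‖ ≤ 2 := by
  have key : ∀ r : ℝ, 0 < r → r < 1 → ‖deriv (deriv Φ) 0‖ ≤ 2 / r ^ 2 := by
    intro r hr0 hr1
    lift r to ℝ≥0 using hr0.le with R hR
    have hsub : closedBall (0:ℂ) R ⊆ ball 0 1 := closedBall_subset_ball hr1
    have hd : DifferentiableOn ℂ Φ (closedBall (0:ℂ) R) := hΦ.mono hsub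
    have hp : HasFPowerSeriesOnBall Φ (cauchyPowerSeries Φ 0 R) 0 R :=
      hd.hasFPowerSeriesOnBall hr0
    have h2 : Nat.factorial 2 • (cauchyPowerSeries Φ 0 R) 2 (fun _ => (1:ℂ)) = iteratedFDeriv ℂ 2 Φ 0 (fun _ => 1) :=
      hp.factorial_smul (1:ℂ) 2
    have hid : iteratedDeriv 2 Φ 0 = iteratedFDeriv ℂ 2 Φ 0 (fun _ => 1) :=
      iteratedDeriv_eq_iteratedFDeriv
    have hdd : deriv (deriv Φ) 0 = iteratedDeriv 2 Φ 0 := by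
      rw [iteratedDeriv_succ, iteratedDeriv_one]
    -- bound on ‖(cauchyPowerSeries Φ 0 R) 2‖
    have hnorm : ‖(cauchyPowerSeries Φ 0 R) 2‖ ≤ ((2 * Real.pi)⁻¹ * ∫ θ : ℝ in (0)..2 * Real.pi,
        ‖Φ (circleMap 0 R θ)‖) * |(R:ℝ)|⁻¹ ^ 2 := norm_cauchyPowerSeries_le Φ 0 R 2
    have hmem : ∀ θ : ℝ, circleMap 0 R θ ∈ ball (0:ℂ) 1 := fun θ =>
      (sphere_subset_closedBall.trans hsub) (circleMap_mem_sphere _ hr0.le θ)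
    have hint : (∫ θ : ℝ in (0)..2 * Real.pi, ‖Φ (circleMap 0 R θ)‖) ≤ 2 * Real.pi := by
      have hcont : ContinuousOn (fun θ : ℝ => ‖Φ (circleMap 0 R θ)‖)
          (Set.uIcc 0 (2 * Real.pi)) :=
        ((hΦ.continuousOn.comp (continuous_circleMap 0 R).continuousOn
          (fun θ _ => hmem θ)).norm)
      have hii : IntervalIntegrable (fun θ : ℝ => ‖Φ (circleMap 0 R θ)‖)
          MeasureTheory.volume 0 (2 * Real.pi) := hcont.intervalIntegrable
      have hmono := intervalIntegral.integral_mono_on (μ := MeasureTheory.volume)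
        (f := fun θ : ℝ => ‖Φ (circleMap 0 R θ)‖) (g := fun _ : ℝ => (1:ℝ))
        Real.two_pi_pos.le hii intervalIntegrable_const
        (fun θ _ => by simpa using hlt _ (hmem θ))
      simpa using hmono
    have hRabs : |(R:ℝ)| = (R:ℝ) := abs_of_pos hr0
    have hp2 : ‖(cauchyPowerSeries Φ 0 R) 2‖ ≤ (R:ℝ)⁻¹ ^ 2 := by
      calc ‖(cauchyPowerSeries Φ 0 R) 2‖ ≤ ((2 * Real.pi)⁻¹ * ∫ θ : ℝ in (0)..2 * Real.pi,
            ‖Φ (circleMap 0 R θ)‖) * |(R:ℝ)|⁻¹ ^ 2 := hnorm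
        _ ≤ ((2 * Real.pi)⁻¹ * (2 * Real.pi)) * |(R:ℝ)|⁻¹ ^ 2 := by
            apply mul_le_mul_of_nonneg_right _ (by positivity)
            exact mul_le_mul_of_nonneg_left hint (by positivity)
        _ = (R:ℝ)⁻¹ ^ 2 := by
            rw [inv_mul_cancel₀ Real.two_pi_pos.ne', one_mul, hRabs]
    have happ : ‖(cauchyPowerSeries Φ 0 R) 2 (fun _ => (1:ℂ))‖ ≤ ‖(cauchyPowerSeries Φ 0 R) 2‖ := by
      have := ((cauchyPowerSeries Φ 0 R) 2).le_opNorm (fun _ => (1:ℂ))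
      simpa using this
    have : ‖deriv (deriv Φ) 0‖ = ‖Nat.factorial 2 • (cauchyPowerSeries Φ 0 R) 2 (fun _ => (1:ℂ))‖ := by
      rw [hdd, hid, ← h2]
    rw [this]
    have : ‖Nat.factorial 2 • (cauchyPowerSeries Φ 0 R) 2 (fun _ => (1:ℂ))‖ = 2 * ‖(cauchyPowerSeries Φ 0 R) 2 (fun _ => (1:ℂ))‖ := by
      simp [Nat.factorial, norm_smul]
    rw [this]
    calc 2 * ‖(cauchyPowerSeries Φ 0 R) 2 (fun _ => (1:ℂ))‖ ≤ 2 * (R:ℝ)⁻¹ ^ 2 := by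
          apply mul_le_mul_of_nonneg_left (happ.trans hp2) (by norm_num)
      _ = 2 / (R:ℝ) ^ 2 := by rw [div_eq_mul_inv, inv_pow]
  -- limit as r → 1
  have htend : Filter.Tendsto (fun r : ℝ => 2 / r ^ 2) (nhdsWithin 1 (Set.Iio 1)) (nhds 2) := by
    have : Filter.Tendsto (fun r : ℝ => 2 / r ^ 2) (nhds 1) (nhds 2) := by
      have := Filter.Tendsto.div (tendsto_const_nhds (x := (2:ℝ)))
        ((continuous_pow 2).tendsto (1:ℝ)) (by norm_num)
      simpa [Pi.div_def] using this
    exact this.mono_left nhdsWithin_le_nhds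
  refine ge_of_tendsto htend ?_
  filter_upwards [Ioo_mem_nhdsLT_of_mem (by norm_num : (1:ℝ) ∈ Set.Ioc 0 1)] with r hr
  exact key r hr.1 hr.2


set_option maxHeartbeats 1000000 in
lemma deriv_rel (t : ℝ) (f Φ : ℂ → ℂ)
    (hf : AnalyticOnNhd ℂ f (ball 0 1)) (hΦ : AnalyticOnNhd ℂ Φ (ball 0 1)) (hΦ0 : Φ 0 = 0)
    (hden : ∀ z ∈ ball (0:ℂ) 1, (1:ℂ) - 2*(t:ℂ)*Φ z + (Φ z)^2 ≠ 0)
    (hfeq : ∀ z ∈ ball (0:ℂ) 1, deriv f z = 1 / ((1:ℂ) - 2*(t:ℂ)*Φ z + (Φ z)^2)) :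
    deriv f 0 = 1 ∧
    deriv (deriv f) 0 = 2*(t:ℂ)*deriv Φ 0 ∧
    deriv (deriv (deriv f)) 0 = 4*(t:ℂ)*(deriv (deriv f) 0)*(deriv Φ 0)
      + 2*(t:ℂ)*(deriv (deriv Φ) 0) - 2*(deriv Φ 0)^2 := by
  have hb0 : (0:ℂ) ∈ ball (0:ℂ) 1 := mem_ball_self one_pos
  have step1 : ∀ z ∈ ball (0:ℂ) 1,
      deriv f z * ((1:ℂ) - 2*(t:ℂ)*Φ z + (Φ z)^2) = 1 := by
    intro z hz
    rw [hfeq z hz, one_div, inv_mul_cancel₀ (hden z hz)]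
  have hf'0 : deriv f 0 = 1 := by
    have := step1 0 hb0
    simpa [hΦ0] using this
  -- derivative of the identity step1
  have step2 : ∀ z ∈ ball (0:ℂ) 1,
      deriv (deriv f) z * ((1:ℂ) - 2*(t:ℂ)*Φ z + (Φ z)^2)
        + deriv f z * (-(2*(t:ℂ))*deriv Φ z + 2*Φ z*deriv Φ z) = 0 := by
    intro z hz
    have hΦz : HasDerivAt Φ (deriv Φ z) z := (hΦ z hz).differentiableAt.hasDerivAt
    have huz : HasDerivAt (deriv f) (deriv (deriv f) z) z :=
      (hf.deriv z hz).differentiableAt.hasDerivAt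
    have hD : HasDerivAt (fun w => (1:ℂ) - 2*(t:ℂ)*Φ w + (Φ w)^2)
        (-(2*(t:ℂ)*deriv Φ z) + (2:ℕ)*(Φ z)^1*deriv Φ z) z :=
      ((hΦz.const_mul (2*(t:ℂ))).const_sub 1).add (hΦz.pow 2)
    have hE : HasDerivAt (fun w => deriv f w * ((1:ℂ) - 2*(t:ℂ)*Φ w + (Φ w)^2))
        (deriv (deriv f) z * ((1:ℂ) - 2*(t:ℂ)*Φ z + (Φ z)^2)
          + deriv f z * (-(2*(t:ℂ)*deriv Φ z) + (2:ℕ)*(Φ z)^1*deriv Φ z)) z :=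
      huz.mul hD
    have hconst : (fun w => deriv f w * ((1:ℂ) - 2*(t:ℂ)*Φ w + (Φ w)^2)) =ᶠ[nhds z]
        (fun _ => (1:ℂ)) :=
      Filter.eventually_of_mem (isOpen_ball.mem_nhds hz) (fun w hw => step1 w hw)
    have h0 : deriv (fun w => deriv f w * ((1:ℂ) - 2*(t:ℂ)*Φ w + (Φ w)^2)) z = 0 := by
      rw [hconst.deriv_eq, deriv_const]
    rw [hE.deriv] at h0
    push_cast at h0 ⊢
    linear_combination h0
  have hA : deriv (deriv f) 0 = 2*(t:ℂ)*deriv Φ 0 := by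
    have := step2 0 hb0
    simp only [hΦ0, hf'0] at this
    ring_nf at this ⊢
    linear_combination this
  refine ⟨hf'0, hA, ?_⟩
  -- differentiate step2 at 0
  have hΦz : HasDerivAt Φ (deriv Φ 0) 0 := (hΦ 0 hb0).differentiableAt.hasDerivAt
  have hΦ'z : HasDerivAt (deriv Φ) (deriv (deriv Φ) 0) 0 :=
    (hΦ.deriv 0 hb0).differentiableAt.hasDerivAt
  have huz : HasDerivAt (deriv f) (deriv (deriv f) 0) 0 :=
    (hf.deriv 0 hb0).differentiableAt.hasDerivAt
  have hu'z : HasDerivAt (deriv (deriv f)) (deriv (deriv (deriv f)) 0) 0 :=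
    (hf.deriv.deriv 0 hb0).differentiableAt.hasDerivAt
  have hD : HasDerivAt (fun w => (1:ℂ) - 2*(t:ℂ)*Φ w + (Φ w)^2)
      (-(2*(t:ℂ)*deriv Φ 0) + (2:ℕ)*(Φ 0)^1*deriv Φ 0) 0 :=
    ((hΦz.const_mul (2*(t:ℂ))).const_sub 1).add (hΦz.pow 2)
  have hD' : HasDerivAt (fun w => -(2*(t:ℂ))*deriv Φ w + 2*Φ w*deriv Φ w)
      (-(2*(t:ℂ))*deriv (deriv Φ) 0
        + ((2*deriv Φ 0)*deriv Φ 0 + (2*Φ 0)*deriv (deriv Φ) 0)) 0 :=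
    (hΦ'z.const_mul (-(2*(t:ℂ)))).add ((hΦz.const_mul 2).mul hΦ'z)
  have hE : HasDerivAt (fun w => deriv (deriv f) w * ((1:ℂ) - 2*(t:ℂ)*Φ w + (Φ w)^2)
      + deriv f w * (-(2*(t:ℂ))*deriv Φ w + 2*Φ w*deriv Φ w))
      ((deriv (deriv (deriv f)) 0 * ((1:ℂ) - 2*(t:ℂ)*Φ 0 + (Φ 0)^2)
        + deriv (deriv f) 0 * (-(2*(t:ℂ)*deriv Φ 0) + (2:ℕ)*(Φ 0)^1*deriv Φ 0))
       + (deriv (deriv f) 0 * (-(2*(t:ℂ))*deriv Φ 0 + 2*Φ 0*deriv Φ 0)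
        + deriv f 0 * (-(2*(t:ℂ))*deriv (deriv Φ) 0
            + ((2*deriv Φ 0)*deriv Φ 0 + (2*Φ 0)*deriv (deriv Φ) 0)))) 0 :=
    (hu'z.mul hD).add (huz.mul hD')
  have hconst : (fun w => deriv (deriv f) w * ((1:ℂ) - 2*(t:ℂ)*Φ w + (Φ w)^2)
      + deriv f w * (-(2*(t:ℂ))*deriv Φ w + 2*Φ w*deriv Φ w)) =ᶠ[nhds 0]
      (fun _ => (0:ℂ)) :=
    Filter.eventually_of_mem (isOpen_ball.mem_nhds hb0) (fun w hw => step2 w hw)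
  have h0 : deriv (fun w => deriv (deriv f) w * ((1:ℂ) - 2*(t:ℂ)*Φ w + (Φ w)^2)
      + deriv f w * (-(2*(t:ℂ))*deriv Φ w + 2*Φ w*deriv Φ w)) 0 = 0 := by
    rw [hconst.deriv_eq, deriv_const]
  rw [hE.deriv] at h0
  simp only [hΦ0, hf'0] at h0
  push_cast at h0 ⊢
  linear_combination h0


set_option maxHeartbeats 1000000 in
lemma inv_rel (f g : ℂ → ℂ)
    (hf : AnalyticOnNhd ℂ f (ball 0 1)) (hg : AnalyticOnNhd ℂ g (ball 0 1))
    (hf0 : f 0 = 0) (hf1 : deriv f 0 = 1)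
    (hgf : ∀ᶠ z in nhds (0 : ℂ), g (f z) = z) :
    deriv g 0 = 1 ∧
    deriv (deriv g) 0 = -deriv (deriv f) 0 ∧
    deriv (deriv (deriv g)) 0 + 3*deriv (deriv g) 0*deriv (deriv f) 0
      + deriv (deriv (deriv f)) 0 = 0 := by
  have hb0 : (0:ℂ) ∈ ball (0:ℂ) 1 := mem_ball_self one_pos
  have hf0b : f 0 ∈ ball (0:ℂ) 1 := by rw [hf0]; exact hb0
  have hfB : ∀ᶠ z in nhds (0:ℂ), f z ∈ ball (0:ℂ) 1 :=
    (hf 0 hb0).continuousAt (isOpen_ball.mem_nhds hf0b)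
  have hzB : ∀ᶠ z in nhds (0:ℂ), z ∈ ball (0:ℂ) 1 :=
    Filter.eventually_of_mem (isOpen_ball.mem_nhds hb0) (fun z hz => hz)
  have E1 : ∀ᶠ z in nhds (0:ℂ), deriv g (f z) * deriv f z = 1 := by
    filter_upwards [hgf.eventually_nhds, hfB, hzB] with z hz hfz hzb
    have hdf : HasDerivAt f (deriv f z) z := (hf z hzb).differentiableAt.hasDerivAt
    have hdg : HasDerivAt g (deriv g (f z)) (f z) := (hg _ hfz).differentiableAt.hasDerivAt
    have hcomp : HasDerivAt (fun y => g (f y)) (deriv g (f z) * deriv f z) z :=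
      HasDerivAt.comp z hdg hdf
    have hid : deriv (fun y => g (f y)) z = 1 := by
      have hEq : (fun y => g (f y)) =ᶠ[nhds z] (fun y => y) := hz
      rw [hEq.deriv_eq, deriv_id'']
    rw [hcomp.deriv] at hid
    exact hid
  have hg1 : deriv g 0 = 1 := by
    have := E1.self_of_nhds
    rwa [hf0, hf1, mul_one] at this
  have E2 : ∀ᶠ z in nhds (0:ℂ),
      deriv (deriv g) (f z) * (deriv f z * deriv f z)
        + deriv g (f z) * deriv (deriv f) z = 0 := by
    filter_upwards [E1.eventually_nhds, hfB, hzB] with z hz1 hfz hzb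
    have hdf : HasDerivAt f (deriv f z) z := (hf z hzb).differentiableAt.hasDerivAt
    have hdg' : HasDerivAt (deriv g) (deriv (deriv g) (f z)) (f z) :=
      (hg.deriv _ hfz).differentiableAt.hasDerivAt
    have hdf' : HasDerivAt (deriv f) (deriv (deriv f) z) z :=
      (hf.deriv z hzb).differentiableAt.hasDerivAt
    have h1 : HasDerivAt (fun y => deriv g (f y)) (deriv (deriv g) (f z) * deriv f z) z :=
      HasDerivAt.comp z hdg' hdf
    have hprod : HasDerivAt (fun y => deriv g (f y) * deriv f y)
        (deriv (deriv g) (f z) * deriv f z * deriv f z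
          + deriv g (f z) * deriv (deriv f) z) z := h1.mul hdf'
    have hconst : (fun y => deriv g (f y) * deriv f y) =ᶠ[nhds z] (fun _ => (1:ℂ)) := hz1
    have h0 : deriv (fun y => deriv g (f y) * deriv f y) z = 0 := by
      rw [hconst.deriv_eq, deriv_const]
    rw [hprod.deriv] at h0
    linear_combination h0
  have I1 : deriv (deriv g) 0 = -deriv (deriv f) 0 := by
    have := E2.self_of_nhds
    rw [hf0, hf1, hg1] at this
    linear_combination this
  refine ⟨hg1, I1, ?_⟩
  -- differentiate E2 at 0
  have hdf : HasDerivAt f (deriv f 0) 0 := (hf 0 hb0).differentiableAt.hasDerivAt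
  have hdf' : HasDerivAt (deriv f) (deriv (deriv f) 0) 0 :=
    (hf.deriv 0 hb0).differentiableAt.hasDerivAt
  have hdf'' : HasDerivAt (deriv (deriv f)) (deriv (deriv (deriv f)) 0) 0 :=
    (hf.deriv.deriv 0 hb0).differentiableAt.hasDerivAt
  have hdg' : HasDerivAt (deriv g) (deriv (deriv g) (f 0)) (f 0) :=
    (hg.deriv _ hf0b).differentiableAt.hasDerivAt
  have hdg'' : HasDerivAt (deriv (deriv g)) (deriv (deriv (deriv g)) (f 0)) (f 0) :=
    (hg.deriv.deriv _ hf0b).differentiableAt.hasDerivAt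
  have h1 : HasDerivAt (fun y => deriv (deriv g) (f y))
      (deriv (deriv (deriv g)) (f 0) * deriv f 0) 0 := HasDerivAt.comp 0 hdg'' hdf
  have h2 : HasDerivAt (fun y => deriv f y * deriv f y)
      (deriv (deriv f) 0 * deriv f 0 + deriv f 0 * deriv (deriv f) 0) 0 := hdf'.mul hdf'
  have h3 : HasDerivAt (fun y => deriv g (f y))
      (deriv (deriv g) (f 0) * deriv f 0) 0 := HasDerivAt.comp 0 hdg' hdf
  have hK : HasDerivAt (fun y => deriv (deriv g) (f y) * (deriv f y * deriv f y)
      + deriv g (f y) * deriv (deriv f) y)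
      ((deriv (deriv (deriv g)) (f 0) * deriv f 0 * (deriv f 0 * deriv f 0)
        + deriv (deriv g) (f 0) * (deriv (deriv f) 0 * deriv f 0 + deriv f 0 * deriv (deriv f) 0))
       + (deriv (deriv g) (f 0) * deriv f 0 * deriv (deriv f) 0
        + deriv g (f 0) * deriv (deriv (deriv f)) 0)) 0 := (h1.mul h2).add (h3.mul hdf'')
  have hconst : (fun y => deriv (deriv g) (f y) * (deriv f y * deriv f y)
      + deriv g (f y) * deriv (deriv f) y) =ᶠ[nhds (0:ℂ)] (fun _ => (0:ℂ)) := E2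
  have h0 : deriv (fun y => deriv (deriv g) (f y) * (deriv f y * deriv f y)
      + deriv g (f y) * deriv (deriv f) y) 0 = 0 := by
    rw [hconst.deriv_eq, deriv_const]
  rw [hK.deriv] at h0
  rw [hf0, hf1, hg1] at h0
  linear_combination h0

/-- **Corollary 2.3, bound (25).** For `1/2 < t < 1`, if `f` belongs to the Chebyshev class `Sigma'(t)`, then `|a₂| ≤ t √(2t) / √(1 - t²)`. -/
theorem chebyshev_abs_a2_le
    (t : ℝ) (f g Φ Ψ : ℂ → ℂ)
    (ht : 1 / 2 < t) (ht1 : t < 1)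
    (hf : AnalyticOnNhd ℂ f (ball 0 1)) (hfinj : Set.InjOn f (ball 0 1))
    (hf0 : f 0 = 0) (hf1 : deriv f 0 = 1)
    (hg : AnalyticOnNhd ℂ g (ball 0 1)) (hginj : Set.InjOn g (ball 0 1))
    (hg0 : g 0 = 0)
    (hgf : ∀ᶠ z in nhds (0 : ℂ), g (f z) = z)
    (hfg : ∀ᶠ w in nhds (0 : ℂ), f (g w) = w)
    (hΦ : AnalyticOnNhd ℂ Φ (ball 0 1)) (hΦ0 : Φ 0 = 0)
    (hΦlt : ∀ z ∈ ball (0 : ℂ) 1, ‖Φ z‖ < 1)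
    (hΨ : AnalyticOnNhd ℂ Ψ (ball 0 1)) (hΨ0 : Ψ 0 = 0)
    (hΨlt : ∀ w ∈ ball (0 : ℂ) 1, ‖Ψ w‖ < 1)
    (hΦden : ∀ z ∈ ball (0 : ℂ) 1, (1 : ℂ) - 2 * (t : ℂ) * Φ z + (Φ z) ^ 2 ≠ 0)
    (hΨden : ∀ w ∈ ball (0 : ℂ) 1, (1 : ℂ) - 2 * (t : ℂ) * Ψ w + (Ψ w) ^ 2 ≠ 0)
    (hfeq : ∀ z ∈ ball (0 : ℂ) 1,
      deriv f z = 1 / ((1 : ℂ) - 2 * (t : ℂ) * Φ z + (Φ z) ^ 2))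
    (hgeq : ∀ w ∈ ball (0 : ℂ) 1,
      deriv g w = 1 / ((1 : ℂ) - 2 * (t : ℂ) * Ψ w + (Ψ w) ^ 2)) :
    ‖iteratedDeriv 2 f 0 / 2‖ ≤ t * Real.sqrt (2 * t) / Real.sqrt (1 - t ^ 2) := by
  have ht0 : (0:ℝ) < t := lt_trans (by norm_num) ht
  have ht2 : (0:ℝ) < 1 - t ^ 2 := by nlinarith
  -- Cauchy bounds on second derivatives of Schwarz functions
  have cΦ : ‖deriv (deriv Φ) 0‖ ≤ 2 :=
    cauchy_second Φ hΦ.differentiableOn (fun z hz => (hΦlt z hz).le)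
  have cΨ : ‖deriv (deriv Ψ) 0‖ ≤ 2 :=
    cauchy_second Ψ hΨ.differentiableOn (fun z hz => (hΨlt z hz).le)
  obtain ⟨hf1', hA, hB⟩ := deriv_rel t f Φ hf hΦ hΦ0 hΦden hfeq
  obtain ⟨hg1', hA', hB'⟩ := deriv_rel t g Ψ hg hΨ hΨ0 hΨden hgeq
  obtain ⟨hg1, I1, I2⟩ := inv_rel f g hf hg hf0 hf1 hgf
  set A := deriv (deriv f) 0 with hAdef
  set P := deriv (deriv (deriv f)) 0
  set G2 := deriv (deriv g) 0
  set G3 := deriv (deriv (deriv g)) 0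
  set c1 := deriv Φ 0
  set c2 := deriv (deriv Φ) 0
  set d1 := deriv Ψ 0
  set d2 := deriv (deriv Ψ) 0
  have h2' : 2*(t:ℂ)^2*P = 4*(t:ℂ)^2*A^2 + 4*(t:ℂ)^3*c2 - A^2 := by
    linear_combination (2*(t:ℂ)^2)*hB + ((1-4*(t:ℂ)^2)*A + 2*(t:ℂ)*c1)*hA
  have h4' : 2*(t:ℂ)^2*G3 = 4*(t:ℂ)^2*G2^2 + 4*(t:ℂ)^3*d2 - G2^2 := by
    linear_combination (2*(t:ℂ)^2)*hB' + ((1-4*(t:ℂ)^2)*G2 + 2*(t:ℂ)*d1)*hA'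
  have hKey : A^2*(1-(t:ℂ)^2) = 2*(t:ℂ)^3*(c2 + d2) := by
    linear_combination (1/2:ℂ)*h2' + (1/2:ℂ)*h4' - (t:ℂ)^2*I2
      + ((1/2:ℂ)*(A-G2) + (t:ℂ)^2*(A+2*G2))*I1
  -- take absolute values
  have habs : ‖A‖^2 * (1 - t^2) ≤ 8*t^3 := by
    have h1 : ‖A^2*(1-(t:ℂ)^2)‖ = ‖A‖^2 * (1 - t^2) := by
      rw [norm_mul, norm_pow]
      congr 1
      have : (1:ℂ) - (t:ℂ)^2 = ((1 - t^2 : ℝ) : ℂ) := by push_cast; ring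
      rw [this, Complex.norm_real, Real.norm_eq_abs, abs_of_pos ht2]
    have h2 : ‖2*(t:ℂ)^3*(c2 + d2)‖ ≤ 8*t^3 := by
      rw [norm_mul]
      have ha : ‖2*(t:ℂ)^3‖ = 2*t^3 := by
        have : (2*(t:ℂ)^3) = ((2*t^3 : ℝ) : ℂ) := by push_cast; ring
        rw [this, Complex.norm_real, Real.norm_eq_abs, abs_of_pos (by positivity)]
      rw [ha]
      have hb : ‖c2 + d2‖ ≤ 4 := by
        calc ‖c2 + d2‖ ≤ ‖c2‖ + ‖d2‖ :=
          norm_add_le _ _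
        _ ≤ 4 := by linarith
      calc 2*t^3 * ‖c2 + d2‖ ≤ 2*t^3 * 4 := by
            apply mul_le_mul_of_nonneg_left hb (by positivity)
        _ = 8*t^3 := by ring
    calc ‖A‖^2 * (1 - t^2) = ‖A^2*(1-(t:ℂ)^2)‖ := h1.symm
      _ = ‖2*(t:ℂ)^3*(c2 + d2)‖ := by rw [hKey]
      _ ≤ 8*t^3 := h2
  -- rewrite goal
  have hiter : iteratedDeriv 2 f 0 = A := by
    rw [iteratedDeriv_succ, iteratedDeriv_one]
  rw [hiter, norm_div]
  have habs2 : ‖(2:ℂ)‖ = 2 := by norm_num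
  rw [habs2]
  set x := ‖A‖ / 2 with hxdef
  have hx0 : 0 ≤ x := by positivity
  have hsq : x^2 ≤ (t * Real.sqrt (2*t) / Real.sqrt (1 - t^2))^2 := by
    have hrhs : (t * Real.sqrt (2*t) / Real.sqrt (1 - t^2))^2 = 2*t^3 / (1 - t^2) := by
      rw [div_pow, mul_pow, Real.sq_sqrt (by positivity : (0:ℝ) ≤ 2*t),
        Real.sq_sqrt ht2.le]
      ring_nf
    rw [hrhs, hxdef]
    rw [div_pow, div_le_div_iff₀ (by norm_num) ht2]
    nlinarith [habs]
  have hy0 : (0:ℝ) ≤ t * Real.sqrt (2*t) / Real.sqrt (1 - t^2) := by positivity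
  calc x = Real.sqrt (x^2) := (Real.sqrt_sq hx0).symm
    _ ≤ Real.sqrt ((t * Real.sqrt (2*t) / Real.sqrt (1 - t^2))^2) := Real.sqrt_le_sqrt hsq
    _ = t * Real.sqrt (2*t) / Real.sqrt (1 - t^2) := Real.sqrt_sq hy0
end

section
/- Let t be a real number with 1/2 < t < 1. If the function f belongs to the class Σ'(t), then the third Taylor–Maclaurin coefficient of f satisfies |a₃| ≤ 2t/3 + t². -/
open Metric


lemma second_deriv_bound (Φ : ℂ → ℂ) (hΦ : AnalyticOnNhd ℂ Φ (ball 0 1))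
    (hlt : ∀ z ∈ ball (0:ℂ) 1, ‖Φ z‖ < 1) :
    ‖deriv (deriv Φ) 0‖ ≤ 2 := by
  have key : ∀ r : ℝ, 0 < r → r < 1 → ‖deriv (deriv Φ) 0‖ ≤ 2 / r ^ 2 := by
    intro r hr0 hr1
    set R : NNReal := ⟨r, hr0.le⟩ with hR
    have hRr : (R : ℝ) = r := rfl
    have hsub : closedBall (0:ℂ) R ⊆ ball 0 1 := by
      rw [hRr]; exact closedBall_subset_ball hr1
    have hd : DifferentiableOn ℂ Φ (closedBall (0:ℂ) R) :=
      (hΦ.differentiableOn).mono hsub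
    have hp := hd.hasFPowerSeriesOnBall (by exact_mod_cast hr0)
    have h1 : iteratedDeriv 2 Φ 0 = (Nat.factorial 2) • (cauchyPowerSeries Φ 0 R 2 fun _ => (1:ℂ)) := by
      rw [iteratedDeriv_eq_iteratedFDeriv, ← hp.factorial_smul (1:ℂ) 2]
    have h2 : ‖cauchyPowerSeries Φ 0 R 2 fun _ => (1:ℂ)‖ ≤ ‖cauchyPowerSeries Φ 0 R 2‖ := by
      have := (cauchyPowerSeries Φ 0 R 2).le_opNorm (fun _ => (1:ℂ))
      simpa using this
    have h3 : ‖cauchyPowerSeries Φ 0 (R:ℝ) 2‖ ≤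
        ((2 * Real.pi)⁻¹ * ∫ θ : ℝ in (0)..2 * Real.pi, ‖Φ (circleMap 0 (R:ℝ) θ)‖) *
          |(R:ℝ)|⁻¹ ^ 2 := norm_cauchyPowerSeries_le Φ 0 R 2
    have hint : (∫ θ : ℝ in (0)..2 * Real.pi, ‖Φ (circleMap 0 (R:ℝ) θ)‖) ≤
        ∫ _ : ℝ in (0)..2 * Real.pi, (1:ℝ) := by
      refine intervalIntegral.integral_mono_on Real.two_pi_pos.le ?_ ?_ ?_
      · have hc : ContinuousOn (fun θ : ℝ => ‖Φ (circleMap 0 (R:ℝ) θ)‖)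
            (Set.uIcc 0 (2*Real.pi)) := by
          apply ContinuousOn.norm
          apply (hΦ.continuousOn).comp (continuous_circleMap 0 (R:ℝ)).continuousOn
          intro θ _
          rw [mem_ball_zero_iff]
          simp only [norm_circleMap_zero]
          rw [hRr, abs_of_pos hr0]; exact hr1
        exact hc.intervalIntegrable
      · exact intervalIntegrable_const
      · intro θ _
        apply le_of_lt
        apply hlt
        rw [mem_ball_zero_iff]
        simp only [norm_circleMap_zero]
        rw [hRr, abs_of_pos hr0]; exact hr1
    have hiter : iteratedDeriv 2 Φ 0 = deriv (deriv Φ) 0 := by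
      rw [show (2:ℕ) = 1 + 1 from rfl, iteratedDeriv_succ, iteratedDeriv_one]
    rw [← hiter, h1]
    have hval : ‖(Nat.factorial 2) • (cauchyPowerSeries Φ 0 R 2 fun _ => (1:ℂ))‖
        = 2 * ‖cauchyPowerSeries Φ 0 R 2 fun _ => (1:ℂ)‖ := by
      have hn : (Nat.factorial 2) • (cauchyPowerSeries Φ 0 R 2 fun _ => (1:ℂ))
          = (2:ℂ) * (cauchyPowerSeries Φ 0 R 2 fun _ => (1:ℂ)) := by
        rw [nsmul_eq_mul]; norm_num [Nat.factorial]
      rw [hn, norm_mul]; norm_num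
    rw [hval]
    have hintval : (∫ _ : ℝ in (0)..2 * Real.pi, (1:ℝ)) = 2 * Real.pi := by simp
    have hb : ‖cauchyPowerSeries Φ 0 R 2 fun _ => (1:ℂ)‖ ≤ 1 / r ^ 2 := by
      refine (h2.trans h3).trans ?_
      rw [hRr, abs_of_pos hr0]
      have : (2 * Real.pi)⁻¹ * ∫ θ : ℝ in (0)..2 * Real.pi, ‖Φ (circleMap 0 r θ)‖ ≤ 1 := by
        rw [inv_mul_le_iff₀ Real.two_pi_pos, mul_one]
        exact hint.trans_eq hintval
      calc ((2 * Real.pi)⁻¹ * ∫ θ : ℝ in (0)..2 * Real.pi, ‖Φ (circleMap 0 r θ)‖) * r⁻¹ ^ 2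
          ≤ 1 * r⁻¹ ^ 2 := by
            apply mul_le_mul_of_nonneg_right this (by positivity)
        _ = 1 / r ^ 2 := by field_simp
    have h2r : 2 * (1 / r ^ 2) = 2 / r ^ 2 := by ring
    linarith [mul_le_mul_of_nonneg_left hb (by norm_num : (0:ℝ) ≤ 2)]
  have htend : Filter.Tendsto (fun r : ℝ => 2 / r ^ 2) (nhdsWithin 1 (Set.Iio 1)) (nhds 2) := by
    have : Filter.Tendsto (fun r : ℝ => 2 / r ^ 2) (nhds 1) (nhds 2) := by
      have hc : ContinuousAt (fun r : ℝ => 2 / r ^ 2) 1 := by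
        apply ContinuousAt.div continuousAt_const (by fun_prop)
        norm_num
      simpa using hc.tendsto
    exact this.mono_left nhdsWithin_le_nhds
  refine ge_of_tendsto htend ?_
  filter_upwards [Ioo_mem_nhdsLT_of_mem (Set.mem_Ioc.2 ⟨(by norm_num : (0:ℝ) < 1), le_rfl⟩)]
    with r hr
  exact key r hr.1 hr.2


theorem chebyshev_abs_a3_le'
    (t : ℝ) (f Φ : ℂ → ℂ)
    (ht : 1 / 2 < t) (ht1 : t < 1)
    (hf : AnalyticOnNhd ℂ f (ball 0 1))
    (hf1 : deriv f 0 = 1)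
    (hΦ : AnalyticOnNhd ℂ Φ (ball 0 1)) (hΦ0 : Φ 0 = 0)
    (hΦlt : ∀ z ∈ ball (0 : ℂ) 1, ‖Φ z‖ < 1)
    (hΦden : ∀ z ∈ ball (0 : ℂ) 1, (1 : ℂ) - 2 * (t : ℂ) * Φ z + (Φ z) ^ 2 ≠ 0)
    (hfeq : ∀ z ∈ ball (0 : ℂ) 1,
      deriv f z = 1 / ((1 : ℂ) - 2 * (t : ℂ) * Φ z + (Φ z) ^ 2)) :
    ‖iteratedDeriv 3 f 0 / 6‖ ≤ 2 * t / 3 + t ^ 2 := by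
  have h0B : (0:ℂ) ∈ ball (0:ℂ) 1 := mem_ball_self one_pos
  have hf' : AnalyticOnNhd ℂ (deriv f) (ball 0 1) := hf.deriv
  have hf'' : AnalyticOnNhd ℂ (deriv (deriv f)) (ball 0 1) := hf'.deriv
  have hΦ' : AnalyticOnNhd ℂ (deriv Φ) (ball 0 1) := hΦ.deriv
  have key : ∀ z ∈ ball (0:ℂ) 1,
      deriv f z * ((1:ℂ) - 2*(t:ℂ)*Φ z + Φ z^2) = 1 := by
    intro z hz
    rw [hfeq z hz]
    exact one_div_mul_cancel (hΦden z hz)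
  have hDz : ∀ z ∈ ball (0:ℂ) 1, HasDerivAt (fun w => (1:ℂ) - 2*(t:ℂ)*Φ w + Φ w^2)
      (-(2*(t:ℂ)) * deriv Φ z + 2 * Φ z * deriv Φ z) z := by
    intro z hz
    have hΦz : HasDerivAt Φ (deriv Φ z) z := ((hΦ z hz).differentiableAt).hasDerivAt
    have h1 : HasDerivAt (fun w => (1:ℂ) - 2*(t:ℂ)*Φ w) (-(2*(t:ℂ)) * deriv Φ z) z := by
      have := (hΦz.const_mul (2*(t:ℂ))).const_sub 1
      refine this.congr_deriv ?_
      ring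
    have h2 : HasDerivAt (fun w => Φ w ^ 2) (2 * Φ z * deriv Φ z) z := by
      have := hΦz.pow 2
      refine this.congr_deriv ?_
      push_cast
      ring
    exact h1.add h2
  have eq1 : ∀ z ∈ ball (0:ℂ) 1,
      deriv (deriv f) z * ((1:ℂ) - 2*(t:ℂ)*Φ z + Φ z^2)
        + deriv f z * (-(2*(t:ℂ)) * deriv Φ z + 2 * Φ z * deriv Φ z) = 0 := by
    intro z hz
    have hf'z : HasDerivAt (deriv f) (deriv (deriv f) z) z :=
      ((hf' z hz).differentiableAt).hasDerivAt
    have hG : HasDerivAt (fun w => deriv f w * ((1:ℂ) - 2*(t:ℂ)*Φ w + Φ w^2))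
        (deriv (deriv f) z * ((1:ℂ) - 2*(t:ℂ)*Φ z + Φ z^2)
          + deriv f z * (-(2*(t:ℂ)) * deriv Φ z + 2 * Φ z * deriv Φ z)) z :=
      hf'z.mul (hDz z hz)
    have heq : (fun w => deriv f w * ((1:ℂ) - 2*(t:ℂ)*Φ w + Φ w^2))
        =ᶠ[nhds z] (fun _ => (1:ℂ)) := by
      filter_upwards [isOpen_ball.mem_nhds hz] with w hw using key w hw
    have h0 : deriv (fun w => deriv f w * ((1:ℂ) - 2*(t:ℂ)*Φ w + Φ w^2)) z = 0 := by
      rw [heq.deriv_eq]; simp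
    rw [← hG.deriv]; exact h0
  have eq2 : deriv (deriv f) 0 = 2*(t:ℂ)*deriv Φ 0 := by
    have h := eq1 0 h0B
    rw [hΦ0, hf1] at h
    linear_combination h
  have hΦ'0 : HasDerivAt (deriv Φ) (deriv (deriv Φ) 0) 0 :=
    ((hΦ' 0 h0B).differentiableAt).hasDerivAt
  have hΦat0 : HasDerivAt Φ (deriv Φ 0) 0 := ((hΦ 0 h0B).differentiableAt).hasDerivAt
  have hf''0 : HasDerivAt (deriv (deriv f)) (deriv (deriv (deriv f)) 0) 0 :=
    ((hf'' 0 h0B).differentiableAt).hasDerivAt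
  have hf'0 : HasDerivAt (deriv f) (deriv (deriv f) 0) 0 :=
    ((hf' 0 h0B).differentiableAt).hasDerivAt
  have hA : HasDerivAt (fun z => -(2*(t:ℂ)) * deriv Φ z)
      (-(2*(t:ℂ)) * deriv (deriv Φ) 0) 0 := hΦ'0.const_mul _
  have hB : HasDerivAt (fun z => 2 * Φ z * deriv Φ z)
      (2 * deriv Φ 0 * deriv Φ 0 + 2 * Φ 0 * deriv (deriv Φ) 0) 0 :=
    (hΦat0.const_mul 2).mul hΦ'0
  have htotal : HasDerivAt (fun z => deriv (deriv f) z * ((1:ℂ) - 2*(t:ℂ)*Φ z + Φ z^2)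
        + deriv f z * (-(2*(t:ℂ)) * deriv Φ z + 2 * Φ z * deriv Φ z))
      ((deriv (deriv (deriv f)) 0 * ((1:ℂ) - 2*(t:ℂ)*Φ 0 + Φ 0^2)
          + deriv (deriv f) 0 * (-(2*(t:ℂ)) * deriv Φ 0 + 2 * Φ 0 * deriv Φ 0))
        + (deriv (deriv f) 0 * (-(2*(t:ℂ)) * deriv Φ 0 + 2 * Φ 0 * deriv Φ 0)
          + deriv f 0 * (-(2*(t:ℂ)) * deriv (deriv Φ) 0
            + (2 * deriv Φ 0 * deriv Φ 0 + 2 * Φ 0 * deriv (deriv Φ) 0)))) 0 :=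
    (hf''0.mul (hDz 0 h0B)).add (hf'0.mul (hA.add hB))
  have heq0 : (fun z => deriv (deriv f) z * ((1:ℂ) - 2*(t:ℂ)*Φ z + Φ z^2)
        + deriv f z * (-(2*(t:ℂ)) * deriv Φ z + 2 * Φ z * deriv Φ z))
      =ᶠ[nhds (0:ℂ)] (fun _ => (0:ℂ)) := by
    filter_upwards [isOpen_ball.mem_nhds h0B] with w hw using eq1 w hw
  have hval : (deriv (deriv (deriv f)) 0 * ((1:ℂ) - 2*(t:ℂ)*Φ 0 + Φ 0^2)
          + deriv (deriv f) 0 * (-(2*(t:ℂ)) * deriv Φ 0 + 2 * Φ 0 * deriv Φ 0))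
        + (deriv (deriv f) 0 * (-(2*(t:ℂ)) * deriv Φ 0 + 2 * Φ 0 * deriv Φ 0)
          + deriv f 0 * (-(2*(t:ℂ)) * deriv (deriv Φ) 0
            + (2 * deriv Φ 0 * deriv Φ 0 + 2 * Φ 0 * deriv (deriv Φ) 0))) = 0 := by
    rw [← htotal.deriv, heq0.deriv_eq]
    simp
  rw [hΦ0, hf1] at hval
  have hthird : deriv (deriv (deriv f)) 0
      = 8*(t:ℂ)^2*(deriv Φ 0)^2 - 2*(deriv Φ 0)^2 + 2*(t:ℂ)*deriv (deriv Φ) 0 := by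
    linear_combination hval + 4*(t:ℂ)*(deriv Φ 0)*eq2
  have hit3 : iteratedDeriv 3 f 0 = deriv (deriv (deriv f)) 0 := by
    rw [show (3:ℕ) = 2+1 from rfl, iteratedDeriv_succ,
      show (2:ℕ) = 1+1 from rfl, iteratedDeriv_succ, iteratedDeriv_one]
  have hmaps : Set.MapsTo Φ (ball (0:ℂ) 1) (ball (0:ℂ) 1) := fun z hz =>
    mem_ball_zero_iff.2 (by exact hΦlt z hz)
  have hc1 : ‖deriv Φ 0‖ ≤ 1 := by
    exact Complex.norm_deriv_le_one_of_mapsTo_ball hΦ.differentiableOn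
      (by rw [hΦ0]; exact hmaps.mono_right ball_subset_closedBall) one_pos
  have hc2 : ‖deriv (deriv Φ) 0‖ ≤ 2 :=
    second_deriv_bound Φ hΦ (fun z hz => by exact hΦlt z hz)
  have hnorm : ‖iteratedDeriv 3 f 0‖ ≤ 8*t^2 - 2 + 4*t := by
    rw [hit3, hthird]
    have e : 8*(t:ℂ)^2*(deriv Φ 0)^2 - 2*(deriv Φ 0)^2 + 2*(t:ℂ)*deriv (deriv Φ) 0
        = ((8*t^2 - 2 : ℝ):ℂ)*(deriv Φ 0)^2 + ((2*t : ℝ):ℂ)*deriv (deriv Φ) 0 := by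
      push_cast; ring
    rw [e]
    have hb := norm_add_le (((8*t^2 - 2 : ℝ):ℂ)*(deriv Φ 0)^2) (((2*t : ℝ):ℂ)*deriv (deriv Φ) 0)
    have e1 : ‖((8*t^2 - 2 : ℝ):ℂ)*(deriv Φ 0)^2‖ = |8*t^2-2| * ‖deriv Φ 0‖^2 := by
      rw [norm_mul, norm_pow, Complex.norm_real, Real.norm_eq_abs]
    have e2 : ‖((2*t : ℝ):ℂ)*deriv (deriv Φ) 0‖ = |2*t| * ‖deriv (deriv Φ) 0‖ := by
      rw [norm_mul, Complex.norm_real, Real.norm_eq_abs]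
    rw [e1, e2] at hb
    have ha1 : |8*t^2-2| = 8*t^2-2 := abs_of_pos (by nlinarith)
    have ha2 : |2*t| = 2*t := abs_of_pos (by linarith)
    rw [ha1, ha2] at hb
    have hX : ‖deriv Φ 0‖^2 ≤ 1 := by nlinarith [norm_nonneg (deriv Φ 0)]
    have k1 : (8*t^2-2) * ‖deriv Φ 0‖^2 ≤ (8*t^2-2) * 1 :=
      mul_le_mul_of_nonneg_left hX (by nlinarith)
    have k2 : 2*t * ‖deriv (deriv Φ) 0‖ ≤ 2*t * 2 :=
      mul_le_mul_of_nonneg_left hc2 (by linarith)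
    linarith
  rw [norm_div]
  have h6 : ‖(6:ℂ)‖ = 6 := by norm_num
  rw [h6]
  rw [div_le_iff₀ (by norm_num : (0:ℝ) < 6)]
  nlinarith

/-- **Corollary 2.3, bound (26).** For `1/2 < t < 1`, if `f` belongs to the Chebyshev class `Sigma'(t)`, then `|a₃| ≤ 2t/3 + t²`. -/
theorem chebyshev_abs_a3_le
    (t : ℝ) (f g Φ Ψ : ℂ → ℂ)
    (ht : 1 / 2 < t) (ht1 : t < 1)
    (hf : AnalyticOnNhd ℂ f (ball 0 1)) (hfinj : Set.InjOn f (ball 0 1))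
    (hf0 : f 0 = 0) (hf1 : deriv f 0 = 1)
    (hg : AnalyticOnNhd ℂ g (ball 0 1)) (hginj : Set.InjOn g (ball 0 1))
    (hg0 : g 0 = 0)
    (hgf : ∀ᶠ z in nhds (0 : ℂ), g (f z) = z)
    (hfg : ∀ᶠ w in nhds (0 : ℂ), f (g w) = w)
    (hΦ : AnalyticOnNhd ℂ Φ (ball 0 1)) (hΦ0 : Φ 0 = 0)
    (hΦlt : ∀ z ∈ ball (0 : ℂ) 1, ‖Φ z‖ < 1)
    (hΨ : AnalyticOnNhd ℂ Ψ (ball 0 1)) (hΨ0 : Ψ 0 = 0)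
    (hΨlt : ∀ w ∈ ball (0 : ℂ) 1, ‖Ψ w‖ < 1)
    (hΦden : ∀ z ∈ ball (0 : ℂ) 1, (1 : ℂ) - 2 * (t : ℂ) * Φ z + (Φ z) ^ 2 ≠ 0)
    (hΨden : ∀ w ∈ ball (0 : ℂ) 1, (1 : ℂ) - 2 * (t : ℂ) * Ψ w + (Ψ w) ^ 2 ≠ 0)
    (hfeq : ∀ z ∈ ball (0 : ℂ) 1,
      deriv f z = 1 / ((1 : ℂ) - 2 * (t : ℂ) * Φ z + (Φ z) ^ 2))
    (hgeq : ∀ w ∈ ball (0 : ℂ) 1,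
      deriv g w = 1 / ((1 : ℂ) - 2 * (t : ℂ) * Ψ w + (Ψ w) ^ 2)) :
    ‖iteratedDeriv 3 f 0 / 6‖ ≤ 2 * t / 3 + t ^ 2 :=
  chebyshev_abs_a3_le' t f Φ ht ht1 hf hf1 hΦ hΦ0 hΦlt hΦden hfeq
end

section
/- Let t be a real number with 1/2 < t < 1. If the function f belongs to the class Σ'(t), then for every real number η: |a₃ − η a₂²| ≤ 4t/3 whenever |η − 1| ≤ (1 − t²)/(3t²), and |a₃ − η a₂²| ≤ 2|η − 1|/(1 − t²) whenever |η − 1| ≥ (1 − t²)/(3t²). -/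
open Metric Filter

private lemma cheb_cauchy2 (Φ : ℂ → ℂ) (hΦ : AnalyticOnNhd ℂ Φ (ball 0 1))
    (hlt : ∀ z ∈ ball (0:ℂ) 1, ‖Φ z‖ < 1) :
    ‖iteratedDeriv 2 Φ 0‖ ≤ 2 := by
  have key : ∀ r : ℝ, 0 < r → r < 1 → ‖iteratedDeriv 2 Φ 0‖ ≤ 2 / r ^ 2 := by
    intro r hr0 hr1
    set R : NNReal := ⟨r, hr0.le⟩ with hR
    have hco : ((R:ℝ)) = r := rfl
    have hsub : closedBall (0:ℂ) r ⊆ ball 0 1 := closedBall_subset_ball hr1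
    have hd : DifferentiableOn ℂ Φ (closedBall (0:ℂ) R) := by
      intro z hz
      exact (hΦ z (hsub hz)).differentiableAt.differentiableWithinAt
    have hps : HasFPowerSeriesOnBall Φ (cauchyPowerSeries Φ 0 R) 0 R :=
      hd.hasFPowerSeriesOnBall (by exact_mod_cast hr0)
    have hfs := hps.factorial_smul (1:ℂ) 2
    have hiter : iteratedDeriv 2 Φ 0 = iteratedFDeriv ℂ 2 Φ 0 (fun _ => 1) :=
      iteratedDeriv_eq_iteratedFDeriv
    have hnorm : ‖iteratedDeriv 2 Φ 0‖
        = 2 * ‖cauchyPowerSeries Φ 0 R 2 (fun _ => (1:ℂ))‖ := by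
      rw [hiter, ← hfs]
      simp [Nat.factorial, norm_smul]
    have hop : ‖cauchyPowerSeries Φ 0 R 2 (fun _ => (1:ℂ))‖ ≤ ‖cauchyPowerSeries Φ 0 R 2‖ := by
      have := (cauchyPowerSeries Φ 0 R 2).le_opNorm (fun _ => (1:ℂ))
      simpa using this
    have hint : (∫ θ : ℝ in (0)..2 * Real.pi, ‖Φ (circleMap 0 R θ)‖)
        ≤ ∫ θ : ℝ in (0)..2 * Real.pi, (1:ℝ) := by
      apply intervalIntegral.integral_mono_on Real.two_pi_pos.le
      · apply Continuous.intervalIntegrable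
        apply Continuous.norm
        apply ContinuousOn.comp_continuous
          (hΦ.continuousOn) (continuous_circleMap 0 R)
        intro θ
        simp only [mem_ball, dist_zero_right]
        have : ‖circleMap 0 R θ‖ = |(R:ℝ)| := norm_circleMap_zero R θ
        simp only [this]
        rw [hco, abs_of_nonneg hr0.le]
        exact hr1
      · exact intervalIntegrable_const
      · intro θ _
        have hmem : circleMap 0 R θ ∈ ball (0:ℂ) 1 := by
          simp only [mem_ball, dist_zero_right]
          have : ‖circleMap 0 R θ‖ = |(R:ℝ)| := norm_circleMap_zero R θ
          simp only [this]
          rw [hco, abs_of_nonneg hr0.le]; exact hr1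
        exact (hlt _ hmem).le
    have hbound := norm_cauchyPowerSeries_le Φ 0 R 2
    have h2pi : (0:ℝ) < 2 * Real.pi := Real.two_pi_pos
    have : ‖cauchyPowerSeries Φ 0 R 2‖ ≤ (1:ℝ) * |(R:ℝ)|⁻¹ ^ 2 := by
      refine hbound.trans ?_
      apply mul_le_mul_of_nonneg_right _ (by positivity)
      calc (2 * Real.pi)⁻¹ * ∫ θ : ℝ in (0)..2 * Real.pi, ‖Φ (circleMap 0 R θ)‖
          ≤ (2 * Real.pi)⁻¹ * ∫ θ : ℝ in (0)..2 * Real.pi, (1:ℝ) :=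
            mul_le_mul_of_nonneg_left hint (by positivity)
        _ = 1 := by simp [mul_comm]; field_simp
    rw [hnorm]
    have hRr : |(R:ℝ)| = r := by rw [hco, abs_of_nonneg hr0.le]
    calc 2 * ‖cauchyPowerSeries Φ 0 R 2 (fun _ => (1:ℂ))‖
        ≤ 2 * (1 * |(R:ℝ)|⁻¹ ^ 2) := by
          apply mul_le_mul_of_nonneg_left (hop.trans this) (by norm_num)
      _ = 2 / r ^ 2 := by rw [hRr]; field_simp
  have htend : Tendsto (fun r : ℝ => 2 / r ^ 2) (nhdsWithin 1 (Set.Iio 1)) (nhds 2) := by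
    have hc : ContinuousAt (fun r : ℝ => 2 / r ^ 2) 1 :=
      ContinuousAt.div continuousAt_const (continuousAt_id.pow 2) (by norm_num)
    have := hc.tendsto
    norm_num at this
    exact this.mono_left nhdsWithin_le_nhds
  refine ge_of_tendsto htend ?_
  filter_upwards [Ioo_mem_nhdsLT_of_mem
    (Set.mem_Ioc.mpr ⟨(by norm_num : (0:ℝ) < 1), le_refl 1⟩)] with r hr
  exact key r hr.1 hr.2

private lemma cheb_coeff_extract (t : ℝ) (f Φ : ℂ → ℂ)
    (hΦ : AnalyticOnNhd ℂ Φ (ball 0 1)) (hΦ0 : Φ 0 = 0)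
    (hΦden : ∀ z ∈ ball (0 : ℂ) 1, (1 : ℂ) - 2 * (t : ℂ) * Φ z + (Φ z) ^ 2 ≠ 0)
    (hfeq : ∀ z ∈ ball (0 : ℂ) 1,
      deriv f z = 1 / ((1 : ℂ) - 2 * (t : ℂ) * Φ z + (Φ z) ^ 2)) :
    iteratedDeriv 2 f 0 = 2 * (t : ℂ) * deriv Φ 0 ∧
    iteratedDeriv 3 f 0 = 2 * (t : ℂ) * iteratedDeriv 2 Φ 0
      + (8 * (t : ℂ) ^ 2 - 2) * (deriv Φ 0) ^ 2 := by
  set D : ℂ → ℂ := fun z => (1 : ℂ) - 2 * (t : ℂ) * Φ z + (Φ z) ^ 2 with hD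
  have h0mem : (0:ℂ) ∈ ball (0:ℂ) 1 := mem_ball_self one_pos
  have hball : ball (0:ℂ) 1 ∈ nhds (0:ℂ) := ball_mem_nhds _ one_pos
  have hDd : ∀ z ∈ ball (0:ℂ) 1, HasDerivAt D
      (-(2 * (t:ℂ) * deriv Φ z) + 2 * Φ z * deriv Φ z) z := by
    intro z hz
    have hΦd : HasDerivAt Φ (deriv Φ z) z := (hΦ z hz).differentiableAt.hasDerivAt
    have h1 : HasDerivAt (fun z => (1:ℂ) - 2 * (t:ℂ) * Φ z)
        (-(2 * (t:ℂ) * deriv Φ z)) z := (hΦd.const_mul (2 * (t:ℂ))).const_sub 1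
    have h2 : HasDerivAt (fun z => (Φ z) ^ 2) (2 * Φ z * deriv Φ z) z := by
      have := hΦd.fun_pow 2
      simpa [mul_comm, mul_assoc, mul_left_comm] using this
    exact h1.add h2
  have hfd : deriv f =ᶠ[nhds (0:ℂ)] fun z => (D z)⁻¹ :=
    eventually_of_mem hball (fun z hz => by rw [hfeq z hz, one_div])
  have hinvd : ∀ z ∈ ball (0:ℂ) 1, HasDerivAt (fun z => (D z)⁻¹)
      (-(-(2 * (t:ℂ) * deriv Φ z) + 2 * Φ z * deriv Φ z) / (D z) ^ 2) z := by
    intro z hz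
    exact (hDd z hz).inv (hΦden z hz)
  have hfd2 : deriv (deriv f) =ᶠ[nhds (0:ℂ)]
      fun z => -(-(2 * (t:ℂ) * deriv Φ z) + 2 * Φ z * deriv Φ z) / (D z) ^ 2 :=
    hfd.deriv.trans (eventually_of_mem hball (fun z hz => (hinvd z hz).deriv))
  have hD0 : D 0 = 1 := by simp [hD, hΦ0]
  have h2 : iteratedDeriv 2 f 0 = 2 * (t : ℂ) * deriv Φ 0 := by
    rw [iteratedDeriv_succ, iteratedDeriv_one]
    rw [hfd2.eq_of_nhds]
    simp [hΦ0, hD0]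
  refine ⟨h2, ?_⟩
  rw [show (3:ℕ) = 2 + 1 from rfl, iteratedDeriv_succ, iteratedDeriv_succ, iteratedDeriv_one]
  rw [hfd2.deriv_eq]
  have hΦd0 : HasDerivAt Φ (deriv Φ 0) 0 := (hΦ 0 h0mem).differentiableAt.hasDerivAt
  have hΦd20 : HasDerivAt (deriv Φ) (iteratedDeriv 2 Φ 0) 0 := by
    have := ((hΦ.deriv) 0 h0mem).differentiableAt.hasDerivAt
    rwa [iteratedDeriv_succ, iteratedDeriv_one]
  have hN : HasDerivAt (fun z => -(-(2 * (t:ℂ) * deriv Φ z) + 2 * Φ z * deriv Φ z))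
      (-(-(2 * (t:ℂ) * iteratedDeriv 2 Φ 0)
        + (2 * deriv Φ 0 * deriv Φ 0 + 2 * Φ 0 * iteratedDeriv 2 Φ 0))) 0 := by
    have h1 : HasDerivAt (fun z => -(2 * (t:ℂ) * deriv Φ z))
        (-(2 * (t:ℂ) * iteratedDeriv 2 Φ 0)) 0 := (hΦd20.const_mul (2 * (t:ℂ))).neg
    have h2' : HasDerivAt (fun z => 2 * Φ z * deriv Φ z)
        (2 * deriv Φ 0 * deriv Φ 0 + 2 * Φ 0 * iteratedDeriv 2 Φ 0) 0 := by
      have := (hΦd0.const_mul (2:ℂ)).mul hΦd20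
      exact this
    exact (h1.add h2').neg
  have hDen : HasDerivAt (fun z => (D z) ^ 2)
      (2 * D 0 * (-(2 * (t:ℂ) * deriv Φ 0) + 2 * Φ 0 * deriv Φ 0)) 0 := by
    have := (hDd 0 h0mem).fun_pow 2
    simpa [mul_comm, mul_assoc, mul_left_comm] using this
  have hdiv := hN.div hDen (by rw [hD0]; norm_num)
  rw [(show HasDerivAt (fun z => -(-(2 * (t:ℂ) * deriv Φ z) + 2 * Φ z * deriv Φ z) / D z ^ 2) _ 0 from hdiv).deriv]
  rw [hΦ0, hD0]
  ring

private lemma cheb_inverse_coeffs (f g : ℂ → ℂ)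
    (hf : AnalyticOnNhd ℂ f (ball 0 1)) (hg : AnalyticOnNhd ℂ g (ball 0 1))
    (hf0 : f 0 = 0) (hf1 : deriv f 0 = 1)
    (hgf : ∀ᶠ z in nhds (0 : ℂ), g (f z) = z) :
    deriv g 0 = 1 ∧ iteratedDeriv 2 g 0 = -iteratedDeriv 2 f 0 ∧
      iteratedDeriv 3 g 0 = 3 * (iteratedDeriv 2 f 0) ^ 2 - iteratedDeriv 3 f 0 := by
  have h0mem : (0:ℂ) ∈ ball (0:ℂ) 1 := mem_ball_self one_pos
  have hball : ball (0:ℂ) 1 ∈ nhds (0:ℂ) := ball_mem_nhds _ one_pos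
  have hcf : ContinuousAt f 0 := (hf 0 h0mem).differentiableAt.continuousAt
  have hev : ∀ᶠ z in nhds (0:ℂ), z ∈ ball (0:ℂ) 1 ∧ f z ∈ ball (0:ℂ) 1 := by
    filter_upwards [hball, hcf.preimage_mem_nhds (by rw [hf0]; exact hball)] with z h1 h2
    exact ⟨h1, h2⟩
  set F1 := deriv f with hF1
  set F2 := deriv F1 with hF2
  set G1 := deriv g with hG1
  set G2 := deriv G1 with hG2
  have hgfEq : (fun z => g (f z)) =ᶠ[nhds (0:ℂ)] (fun z => z) := hgf
  have hcomp : ∀ᶠ z in nhds (0:ℂ), HasDerivAt (fun w => g (f w)) (G1 (f z) * F1 z) z := by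
    filter_upwards [hev] with z hz
    have h1 : HasDerivAt f (F1 z) z := (hf z hz.1).differentiableAt.hasDerivAt
    have h2 : HasDerivAt g (G1 (f z)) (f z) := (hg _ hz.2).differentiableAt.hasDerivAt
    simpa [Function.comp_def] using h2.comp z h1
  have chain1 : (fun z => G1 (f z) * F1 z) =ᶠ[nhds (0:ℂ)] (fun _ => (1:ℂ)) := by
    have hd1 : deriv (fun z => g (f z)) =ᶠ[nhds (0:ℂ)] deriv (fun z : ℂ => z) := hgfEq.deriv
    have hd2 : ∀ᶠ z in nhds (0:ℂ), deriv (fun w => g (f w)) z = G1 (f z) * F1 z := by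
      filter_upwards [hcomp] with z hz using hz.deriv
    filter_upwards [hd1, hd2] with z h1 h2
    rw [← h2, h1, deriv_id'']
  have hg1 : G1 0 = 1 := by
    have := chain1.eq_of_nhds
    simpa [hf0, hf1] using this
  have hcomp2 : ∀ᶠ z in nhds (0:ℂ),
      HasDerivAt (fun w => G1 (f w) * F1 w) (G2 (f z) * F1 z * F1 z + G1 (f z) * F2 z) z := by
    filter_upwards [hev] with z hz
    have h1 : HasDerivAt f (F1 z) z := (hf z hz.1).differentiableAt.hasDerivAt
    have hG1d : HasDerivAt G1 (G2 (f z)) (f z) := ((hg.deriv) _ hz.2).differentiableAt.hasDerivAt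
    have ha : HasDerivAt (fun w => G1 (f w)) (G2 (f z) * F1 z) z := by
      simpa [Function.comp_def] using hG1d.comp z h1
    have hb : HasDerivAt F1 (F2 z) z := ((hf.deriv) z hz.1).differentiableAt.hasDerivAt
    exact ha.mul hb
  have chain2 : (fun z => G2 (f z) * F1 z * F1 z + G1 (f z) * F2 z)
      =ᶠ[nhds (0:ℂ)] (fun _ => (0:ℂ)) := by
    have hd1 : deriv (fun z => G1 (f z) * F1 z) =ᶠ[nhds (0:ℂ)]
        deriv (fun _ : ℂ => (1:ℂ)) := chain1.deriv
    have hd2 : ∀ᶠ z in nhds (0:ℂ), deriv (fun w => G1 (f w) * F1 w) z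
        = G2 (f z) * F1 z * F1 z + G1 (f z) * F2 z := by
      filter_upwards [hcomp2] with z hz using hz.deriv
    filter_upwards [hd1, hd2] with z h1 h2
    rw [← h2, h1, deriv_const]
  have hg2 : G2 0 = -F2 0 := by
    have := chain2.eq_of_nhds
    simp only [hf0, hf1] at this
    rw [hg1] at this
    linear_combination this
  have hzero3 : deriv (fun z => G2 (f z) * F1 z * F1 z + G1 (f z) * F2 z) 0 = 0 := by
    rw [chain2.deriv_eq, deriv_const]
  set F3 := deriv F2 with hF3
  set G3 := deriv G2 with hG3
  have h1 : HasDerivAt f (F1 0) 0 := (hf 0 h0mem).differentiableAt.hasDerivAt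
  have hbF : HasDerivAt F1 (F2 0) 0 := ((hf.deriv) 0 h0mem).differentiableAt.hasDerivAt
  have hcF : HasDerivAt F2 (F3 0) 0 := ((hf.deriv.deriv) 0 h0mem).differentiableAt.hasDerivAt
  have hG2d : HasDerivAt G2 (G3 0) 0 := ((hg.deriv.deriv) 0 h0mem).differentiableAt.hasDerivAt
  have hG1d : HasDerivAt G1 (G2 0) 0 := ((hg.deriv) 0 h0mem).differentiableAt.hasDerivAt
  have ha : HasDerivAt (fun w => G2 (f w)) (G3 0 * F1 0) 0 := by
    have : HasDerivAt G2 (G3 (f 0)) (f 0) := by rw [hf0]; exact hG2d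
    simpa [Function.comp_def, hf0] using this.comp 0 h1
  have hc : HasDerivAt (fun w => G1 (f w)) (G2 0 * F1 0) 0 := by
    have : HasDerivAt G1 (G2 (f 0)) (f 0) := by rw [hf0]; exact hG1d
    simpa [Function.comp_def, hf0] using this.comp 0 h1
  have hfull : HasDerivAt (fun z => G2 (f z) * F1 z * F1 z + G1 (f z) * F2 z)
      ((G3 0 * F1 0 * F1 0 + G2 (f 0) * F2 0) * F1 0 + G2 (f 0) * F1 0 * F2 0
        + (G2 0 * F1 0 * F2 0 + G1 (f 0) * F3 0)) 0 := by
    exact ((ha.mul hbF).mul hbF).add (hc.mul hcF)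
  have h3 := hfull.deriv
  rw [hzero3] at h3
  simp only [hf0, hf1] at h3
  have e2 : iteratedDeriv 2 f 0 = F2 0 := by
    rw [iteratedDeriv_succ, iteratedDeriv_one, hF2, hF1]
  have e3 : iteratedDeriv 3 f 0 = F3 0 := by
    rw [show (3:ℕ) = 2 + 1 from rfl, iteratedDeriv_succ, iteratedDeriv_succ, iteratedDeriv_one,
      hF3, hF2, hF1]
  have e2g : iteratedDeriv 2 g 0 = G2 0 := by
    rw [iteratedDeriv_succ, iteratedDeriv_one, hG2, hG1]
  have e3g : iteratedDeriv 3 g 0 = G3 0 := by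
    rw [show (3:ℕ) = 2 + 1 from rfl, iteratedDeriv_succ, iteratedDeriv_succ, iteratedDeriv_one,
      hG3, hG2, hG1]
  refine ⟨hg1, by rw [e2g, e2, hg2], ?_⟩
  rw [e3g, e3, e2]
  rw [hg1, hg2] at h3
  linear_combination -h3

private lemma cheb_schwarz_deriv (Φ : ℂ → ℂ) (hΦ : AnalyticOnNhd ℂ Φ (ball 0 1))
    (hΦ0 : Φ 0 = 0) (hlt : ∀ z ∈ ball (0:ℂ) 1, ‖Φ z‖ < 1) :
    ‖deriv Φ 0‖ ≤ 1 := by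
  have hd : DifferentiableOn ℂ Φ (ball (0:ℂ) 1) := fun z hz =>
    (hΦ z hz).differentiableAt.differentiableWithinAt
  have hmaps : Set.MapsTo Φ (ball (0:ℂ) 1) (ball (Φ 0) 1) := by
    intro z hz
    rw [hΦ0]
    simpa [mem_ball, dist_zero_right] using hlt z hz
  have := Complex.norm_deriv_le_div_of_mapsTo_ball hd (hmaps.mono_right ball_subset_closedBall) one_pos
  simpa using this

set_option maxHeartbeats 1000000 in
/-- **Corollary 2.3, bound (27).** For `1/2 < t < 1`, if `f` belongs to the Chebyshev class `Sigma'(t)`, then for every real `η` the Fekete-Szego functional satisfies the two stated bounds. -/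
theorem chebyshev_fekete_szego
    (t : ℝ) (f g Φ Ψ : ℂ → ℂ)
    (ht : 1 / 2 < t) (ht1 : t < 1)
    (hf : AnalyticOnNhd ℂ f (ball 0 1)) (hfinj : Set.InjOn f (ball 0 1))
    (hf0 : f 0 = 0) (hf1 : deriv f 0 = 1)
    (hg : AnalyticOnNhd ℂ g (ball 0 1)) (hginj : Set.InjOn g (ball 0 1))
    (hg0 : g 0 = 0)
    (hgf : ∀ᶠ z in nhds (0 : ℂ), g (f z) = z)
    (hfg : ∀ᶠ w in nhds (0 : ℂ), f (g w) = w)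
    (hΦ : AnalyticOnNhd ℂ Φ (ball 0 1)) (hΦ0 : Φ 0 = 0)
    (hΦlt : ∀ z ∈ ball (0 : ℂ) 1, ‖Φ z‖ < 1)
    (hΨ : AnalyticOnNhd ℂ Ψ (ball 0 1)) (hΨ0 : Ψ 0 = 0)
    (hΨlt : ∀ w ∈ ball (0 : ℂ) 1, ‖Ψ w‖ < 1)
    (hΦden : ∀ z ∈ ball (0 : ℂ) 1, (1 : ℂ) - 2 * (t : ℂ) * Φ z + (Φ z) ^ 2 ≠ 0)
    (hΨden : ∀ w ∈ ball (0 : ℂ) 1, (1 : ℂ) - 2 * (t : ℂ) * Ψ w + (Ψ w) ^ 2 ≠ 0)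
    (hfeq : ∀ z ∈ ball (0 : ℂ) 1,
      deriv f z = 1 / ((1 : ℂ) - 2 * (t : ℂ) * Φ z + (Φ z) ^ 2))
    (hgeq : ∀ w ∈ ball (0 : ℂ) 1,
      deriv g w = 1 / ((1 : ℂ) - 2 * (t : ℂ) * Ψ w + (Ψ w) ^ 2)) :
    ∀ η : ℝ,
      (|η - 1| ≤ (1 - t ^ 2) / (3 * t ^ 2) →
        ‖iteratedDeriv 3 f 0 / 6 - (η : ℂ) * (iteratedDeriv 2 f 0 / 2) ^ 2‖ ≤ 4 * t / 3) ∧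
      ((1 - t ^ 2) / (3 * t ^ 2) ≤ |η - 1| →
        ‖iteratedDeriv 3 f 0 / 6 - (η : ℂ) * (iteratedDeriv 2 f 0 / 2) ^ 2‖ ≤ 2 * |η - 1| / (1 - t ^ 2)) := by
  have ht0 : (0:ℝ) < t := by linarith
  have htC : (2 * (t:ℂ)) ≠ 0 := by
    simp only [ne_eq, mul_eq_zero, OfNat.ofNat_ne_zero, false_or, Complex.ofReal_eq_zero]
    exact ht0.ne'
  obtain ⟨hA2, hA3⟩ := cheb_coeff_extract t f Φ hΦ hΦ0 hΦden hfeq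
  obtain ⟨hB2, hB3⟩ := cheb_coeff_extract t g Ψ hΨ hΨ0 hΨden hgeq
  obtain ⟨hg1, hgB2, hgB3⟩ := cheb_inverse_coeffs f g hf hg hf0 hf1 hgf
  set c1 := deriv Φ 0 with hc1def
  set d1 := deriv Ψ 0 with hd1def
  set P2 := iteratedDeriv 2 Φ 0 with hP2def
  set Q2 := iteratedDeriv 2 Ψ 0 with hQ2def
  have hd1 : d1 = -c1 := by
    have h := hgB2
    rw [hB2, hA2] at h
    have h' : 2 * (t:ℂ) * d1 = 2 * (t:ℂ) * (-c1) := by linear_combination h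
    exact mul_left_cancel₀ htC h'
  have hQ' : 2*(t:ℂ)*Q2 = 12*(t:ℂ)^2*c1^2 - 2*(t:ℂ)*P2 - 2*(8*(t:ℂ)^2 - 2)*c1^2 := by
    have h := hgB3
    rw [hB3, hA3, hA2, hd1] at h
    linear_combination h
  -- Schwarz and Cauchy bounds
  have hxle : ‖c1‖ ≤ 1 := cheb_schwarz_deriv Φ hΦ hΦ0 hΦlt
  have hPle : ‖P2‖ ≤ 2 := cheb_cauchy2 Φ hΦ hΦlt
  have hQle : ‖Q2‖ ≤ 2 := cheb_cauchy2 Ψ hΨ hΨlt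
  have hx0 : (0:ℝ) ≤ ‖c1‖ := norm_nonneg c1
  have htt : (0:ℝ) < 1 - t^2 := by nlinarith
  set x := ‖c1‖ with hxdef
  intro η
  -- absolute value bound
  have hE : iteratedDeriv 3 f 0 / 6 - (η : ℂ) * (iteratedDeriv 2 f 0 / 2) ^ 2
      = (t:ℂ) * (P2 - Q2) / 6 + (1 - (η:ℂ)) * (t:ℂ)^2 * c1^2 := by
    rw [hA3, hA2]
    linear_combination (1/12 : ℂ) * hQ'
  have habs : ‖iteratedDeriv 3 f 0 / 6 - (η : ℂ) * (iteratedDeriv 2 f 0 / 2) ^ 2‖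
      ≤ 2*t/3 + |η - 1| * t^2 * x^2 := by
    rw [hE]
    refine (norm_add_le _ _).trans ?_
    have h1 : ‖(t:ℂ) * (P2 - Q2) / 6‖ ≤ 2*t/3 := by
      rw [norm_div, norm_mul, Complex.norm_real, Real.norm_eq_abs, abs_of_pos ht0]
      have h6 : ‖(6:ℂ)‖ = 6 := by norm_num
      rw [h6]
      have hsub : ‖P2 - Q2‖ ≤ 4 := by
        have := norm_sub_le P2 Q2
        linarith
      rw [div_le_iff₀ (by norm_num : (0:ℝ) < 6)]
      calc t * ‖P2 - Q2‖ ≤ t * 4 := mul_le_mul_of_nonneg_left hsub ht0.le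
        _ = 2*t/3*6 := by ring
    have h2 : ‖(1 - (η:ℂ)) * (t:ℂ)^2 * c1^2‖
        = |η - 1| * t^2 * x^2 := by
      rw [norm_mul, norm_mul, norm_pow, norm_pow, Complex.norm_real, Real.norm_eq_abs]
      have he : (1 : ℂ) - (η:ℂ) = ((1 - η : ℝ) : ℂ) := by push_cast; ring
      rw [he, Complex.norm_real, Real.norm_eq_abs, abs_sub_comm, sq_abs]
    rw [h2]
    linarith
  set s := |η - 1| with hsdef
  have hs : (0:ℝ) ≤ s := abs_nonneg _
  constructor
  · intro hcase
    refine habs.trans ?_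
    have h1' : s*(3*t^2) ≤ 1 - t^2 := by
      rw [← le_div_iff₀ (by positivity)]; exact hcase
    nlinarith [sq_nonneg x, mul_nonneg hs (sq_nonneg t), mul_le_one₀ hxle hx0 hxle]
  · intro hcase
    refine habs.trans ?_
    have h1' : 1 - t^2 ≤ s*(3*t^2) := by
      rw [← div_le_iff₀ (by positivity)]; exact hcase
    rw [le_div_iff₀ htt]
    have hxx : x^2 ≤ 1 := by nlinarith
    have h2' : 2*t^3 ≤ 2 - t^2 + t^4 := by nlinarith [sq_nonneg (1-t), sq_nonneg t]
    have fact2 : 2*t^3*(1-t^2) ≤ (2 - t^2 + t^4)*(1-t^2) :=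
      mul_le_mul_of_nonneg_right h2' htt.le
    have fact3 : (1-t^2)*(2 - t^2 + t^4) ≤ (s*(3*t^2))*(2 - t^2 + t^4) :=
      mul_le_mul_of_nonneg_right h1' (by nlinarith [sq_nonneg (1-t), sq_nonneg t])
    have key : (2*t/3 + s*t^2)*(1-t^2) ≤ 2*s := by
      nlinarith [fact2, fact3, mul_pos ht0 ht0, sq_nonneg t, mul_nonneg hs (sq_nonneg t)]
    nlinarith [mul_nonneg (mul_nonneg hs (sq_nonneg t)) htt.le,
      mul_le_mul_of_nonneg_right
        (mul_le_mul_of_nonneg_left hxx (mul_nonneg hs (sq_nonneg t))) htt.le]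
end

section
/- Let t be a real number with 1/2 < t < 1. If the function f belongs to the class Σ'(t), then |a₃ − a₂²| ≤ 4t/3. -/
open Metric

/-- Schwarz bound for the first Taylor coefficient of a Schwarz function. -/
lemma chebyshev_aux_schwarz_c1 (Φ : ℂ → ℂ) (hΦ : AnalyticOnNhd ℂ Φ (ball 0 1)) (hΦ0 : Φ 0 = 0)
    (hΦlt : ∀ z ∈ ball (0 : ℂ) 1, ‖Φ z‖ < 1) :
    ‖deriv Φ 0‖ ≤ 1 := by
  have hmaps : Set.MapsTo Φ (ball 0 1) (ball (Φ 0) 1) := by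
    intro z hz; rw [hΦ0]; simpa [Complex.dist_eq] using hΦlt z hz
  simpa using Complex.norm_deriv_le_div_of_mapsTo_ball hΦ.differentiableOn (hmaps.mono_right ball_subset_closedBall) one_pos

/-- Schwarz-type bound for the second derivative at `0` of a Schwarz function. -/
lemma chebyshev_aux_schwarz_c2 (Φ : ℂ → ℂ) (hΦ : AnalyticOnNhd ℂ Φ (ball 0 1)) (hΦ0 : Φ 0 = 0)
    (hΦlt : ∀ z ∈ ball (0 : ℂ) 1, ‖Φ z‖ < 1) :
    ‖deriv (deriv Φ) 0‖ ≤ 2 := by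
  have hmaps : Set.MapsTo Φ (ball 0 1) (ball (Φ 0) 1) := by
    intro z hz; rw [hΦ0]; simpa [Complex.dist_eq] using hΦlt z hz
  set h := dslope Φ 0 with hh
  have hhd : DifferentiableOn ℂ h (ball 0 1) :=
    (Complex.differentiableOn_dslope (isOpen_ball.mem_nhds (mem_ball_self one_pos))).mpr
      hΦ.differentiableOn
  have hbd : ∀ z ∈ ball (0:ℂ) 1, ‖h z‖ ≤ 1 := fun z hz => by
    simpa using Complex.norm_dslope_le_div_of_mapsTo_ball hΦ.differentiableOn (hmaps.mono_right ball_subset_closedBall) hz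
  have key : ‖deriv h 0‖ ≤ 1 := by
    refine le_of_forall_pos_le_add fun ε hε => ?_
    set r : ℝ := (1 + ε)⁻¹ with hr
    have h0r : 0 < r := by positivity
    have hr1 : r < 1 := by
      rw [hr, inv_lt_one_iff₀]; right; linarith
    have hsub : closedBall (0:ℂ) r ⊆ ball 0 1 := closedBall_subset_ball hr1
    have hdc : DiffContOnCl ℂ h (ball 0 r) := by
      constructor
      · exact hhd.mono (ball_subset_ball hr1.le)
      · refine (hhd.continuousOn).mono ?_
        rw [closure_ball 0 h0r.ne']
        exact hsub
    have := Complex.norm_deriv_le_of_forall_mem_sphere_norm_le h0r hdc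
      (fun z hz => hbd z (hsub (sphere_subset_closedBall hz)))
    calc ‖deriv h 0‖ ≤ 1 / r := this
    _ = 1 + ε := by rw [hr]; field_simp
  have hΦeq : ∀ z : ℂ, Φ z = z * h z := fun z => by
    have := sub_smul_dslope Φ 0 z
    simp only [sub_zero, smul_eq_mul, hΦ0] at this
    rw [← this, hh]
  have hha : AnalyticAt ℂ h 0 := by
    obtain ⟨p, hp⟩ := hΦ 0 (mem_ball_self one_pos)
    exact hp.has_fpower_series_dslope_fslope.analyticAt
  have E : deriv Φ =ᶠ[nhds (0:ℂ)] fun z => h z + z * deriv h z := by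
    filter_upwards [isOpen_ball.mem_nhds (mem_ball_self one_pos)] with z hz
    have hd : HasDerivAt (fun w => w * h w) (1 * h z + z * deriv h z) z :=
      (hasDerivAt_id z).mul (hhd.differentiableAt (isOpen_ball.mem_nhds hz)).hasDerivAt
    have : deriv Φ z = deriv (fun w => w * h w) z := by
      congr 1; funext w; exact hΦeq w
    rw [this, hd.deriv, one_mul]
  have hdh : DifferentiableAt ℂ (deriv h) 0 := by
    have : DifferentiableAt ℂ (fun z => fderiv ℂ h z 1) 0 :=
      hha.fderiv.differentiableAt.clm_apply (differentiableAt_const _)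
    simpa only [fderiv_apply_one_eq_deriv] using this
  have hD2 : deriv (deriv Φ) 0 = 2 * deriv h 0 := by
    rw [E.deriv_eq]
    have hd : HasDerivAt (fun z => h z + z * deriv h z)
        (deriv h 0 + (1 * deriv h 0 + 0 * deriv (deriv h) 0)) 0 :=
      hha.differentiableAt.hasDerivAt.add
        ((hasDerivAt_id 0).mul hdh.hasDerivAt)
    rw [hd.deriv]; ring
  rw [hD2]
  calc ‖2 * deriv h 0‖ = 2 * ‖deriv h 0‖ := by
        simp [norm_mul]
  _ ≤ 2 * 1 := by linarith
  _ = 2 := by ring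

/-- Derivative computation: the first iterated derivatives of `f` from `f' = 1/(1-2tΦ+Φ²)`. -/
lemma chebyshev_aux_derivs (t : ℝ) (f Φ : ℂ → ℂ)
    (hΦ : AnalyticOnNhd ℂ Φ (ball 0 1)) (hΦ0 : Φ 0 = 0)
    (hΦden : ∀ z ∈ ball (0 : ℂ) 1, (1 : ℂ) - 2 * (t : ℂ) * Φ z + (Φ z) ^ 2 ≠ 0)
    (hfeq : ∀ z ∈ ball (0 : ℂ) 1,
      deriv f z = 1 / ((1 : ℂ) - 2 * (t : ℂ) * Φ z + (Φ z) ^ 2)) :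
    iteratedDeriv 2 f 0 = 2 * (t:ℂ) * deriv Φ 0 ∧
    iteratedDeriv 3 f 0 = 2 * (t:ℂ) * deriv (deriv Φ) 0 - 2 * (deriv Φ 0)^2
      + 8 * (t:ℂ)^2 * (deriv Φ 0)^2 := by
  have h0mem : (0:ℂ) ∈ ball (0:ℂ) 1 := mem_ball_self one_pos
  set c1 := deriv Φ 0 with hc1
  set C2 := deriv (deriv Φ) 0 with hC2
  set D : ℂ → ℂ := fun z => 1 - 2*(t:ℂ)*Φ z + Φ z^2 with hD
  have hΦda : ∀ z ∈ ball (0:ℂ) 1, DifferentiableAt ℂ Φ z := fun z hz =>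
    (hΦ z hz).differentiableAt
  have hDhas : ∀ z ∈ ball (0:ℂ) 1,
      HasDerivAt D (2*Φ z*deriv Φ z - 2*(t:ℂ)*deriv Φ z) z := by
    intro z hz
    have h1 : HasDerivAt (fun w => 2*(t:ℂ)*Φ w) (2*(t:ℂ)*deriv Φ z) z :=
      ((hΦda z hz).hasDerivAt).const_mul _
    have h2 : HasDerivAt (fun w => (Φ w)^2) ((2:ℕ)*Φ z^1*deriv Φ z) z :=
      ((hΦda z hz).hasDerivAt).pow 2
    have := ((hasDerivAt_const z (1:ℂ)).sub h1).add h2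
    refine this.congr_deriv ?_
    push_cast; ring
  have hD0 : D 0 = 1 := by simp [hD, hΦ0]
  have E1 : ∀ z ∈ ball (0:ℂ) 1, deriv f z = (D z)⁻¹ := by
    intro z hz; rw [hfeq z hz, one_div]
  have step2 : ∀ z ∈ ball (0:ℂ) 1,
      deriv (deriv f) z = (2*(t:ℂ)*deriv Φ z - 2*Φ z*deriv Φ z) / (D z)^2 := by
    intro z hz
    have e : deriv f =ᶠ[nhds z] fun w => (D w)⁻¹ :=
      Filter.eventually_of_mem (isOpen_ball.mem_nhds hz) (fun w hw => E1 w hw)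
    rw [e.deriv_eq, show deriv (fun w => (D w)⁻¹) z = _ from ((hDhas z hz).inv (hΦden z hz)).deriv]
    ring
  have i2 : iteratedDeriv 2 f 0 = 2*(t:ℂ)*c1 := by
    rw [show (2:ℕ) = 1+1 from rfl, iteratedDeriv_succ, iteratedDeriv_one, step2 0 h0mem,
      hD0, hΦ0]
    ring
  refine ⟨i2, ?_⟩
  have e2 : deriv (deriv f) =ᶠ[nhds (0:ℂ)]
      fun z => (2*(t:ℂ)*deriv Φ z - 2*Φ z*deriv Φ z) / (D z)^2 :=
    Filter.eventually_of_mem (isOpen_ball.mem_nhds h0mem) (fun z hz => step2 z hz)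
  have i3 : iteratedDeriv 3 f 0 = deriv (deriv (deriv f)) 0 := by
    rw [show (3:ℕ) = 2+1 from rfl, iteratedDeriv_succ,
      show (2:ℕ) = 1+1 from rfl, iteratedDeriv_succ, iteratedDeriv_one]
  rw [i3, e2.deriv_eq]
  have hdΦ0 : DifferentiableAt ℂ (deriv Φ) 0 := (hΦ.deriv 0 h0mem).differentiableAt
  have hnum : HasDerivAt (fun z => 2*(t:ℂ)*deriv Φ z - 2*Φ z*deriv Φ z)
      (2*(t:ℂ)*C2 - ((2*c1)*c1 + (2*Φ 0)*C2)) 0 := by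
    have h1 : HasDerivAt (fun z => 2*(t:ℂ)*deriv Φ z) (2*(t:ℂ)*C2) 0 :=
      hdΦ0.hasDerivAt.const_mul _
    have h2a : HasDerivAt (fun z => 2*Φ z) (2*c1) 0 :=
      ((hΦda 0 h0mem).hasDerivAt).const_mul _
    exact h1.sub (h2a.mul hdΦ0.hasDerivAt)
  have hden : HasDerivAt (fun z => (D z)^2)
      ((2:ℕ)*(D 0)^1*(2*Φ 0*deriv Φ 0 - 2*(t:ℂ)*deriv Φ 0)) 0 :=
    (hDhas 0 h0mem).pow 2
  have hden0 : (D 0)^2 ≠ 0 := by rw [hD0]; norm_num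
  rw [show deriv (fun z => (2*(t:ℂ)*deriv Φ z - 2*Φ z*deriv Φ z) / (D z)^2) 0 = _ from (hnum.div hden hden0).deriv, hD0, hΦ0]
  push_cast
  ring

/-- **Corollary 2.4, bound (28).** For `1/2 < t < 1`, if `f` belongs to the Chebyshev class `Sigma'(t)`, then `|a₃ - a₂²| ≤ 4t/3`. -/
theorem chebyshev_abs_a3_sub_a2_sq_le
    (t : ℝ) (f g Φ Ψ : ℂ → ℂ)
    (ht : 1 / 2 < t) (ht1 : t < 1)
    (hf : AnalyticOnNhd ℂ f (ball 0 1)) (hfinj : Set.InjOn f (ball 0 1))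
    (hf0 : f 0 = 0) (hf1 : deriv f 0 = 1)
    (hg : AnalyticOnNhd ℂ g (ball 0 1)) (hginj : Set.InjOn g (ball 0 1))
    (hg0 : g 0 = 0)
    (hgf : ∀ᶠ z in nhds (0 : ℂ), g (f z) = z)
    (hfg : ∀ᶠ w in nhds (0 : ℂ), f (g w) = w)
    (hΦ : AnalyticOnNhd ℂ Φ (ball 0 1)) (hΦ0 : Φ 0 = 0)
    (hΦlt : ∀ z ∈ ball (0 : ℂ) 1, ‖Φ z‖ < 1)
    (hΨ : AnalyticOnNhd ℂ Ψ (ball 0 1)) (hΨ0 : Ψ 0 = 0)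
    (hΨlt : ∀ w ∈ ball (0 : ℂ) 1, ‖Ψ w‖ < 1)
    (hΦden : ∀ z ∈ ball (0 : ℂ) 1, (1 : ℂ) - 2 * (t : ℂ) * Φ z + (Φ z) ^ 2 ≠ 0)
    (hΨden : ∀ w ∈ ball (0 : ℂ) 1, (1 : ℂ) - 2 * (t : ℂ) * Ψ w + (Ψ w) ^ 2 ≠ 0)
    (hfeq : ∀ z ∈ ball (0 : ℂ) 1,
      deriv f z = 1 / ((1 : ℂ) - 2 * (t : ℂ) * Φ z + (Φ z) ^ 2))
    (hgeq : ∀ w ∈ ball (0 : ℂ) 1,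
      deriv g w = 1 / ((1 : ℂ) - 2 * (t : ℂ) * Ψ w + (Ψ w) ^ 2)) :
    ‖iteratedDeriv 3 f 0 / 6 - (iteratedDeriv 2 f 0 / 2) ^ 2‖ ≤ 4 * t / 3 := by
  obtain ⟨i2, i3⟩ := chebyshev_aux_derivs t f Φ hΦ hΦ0 hΦden hfeq
  have hc1 : ‖deriv Φ 0‖ ≤ 1 := chebyshev_aux_schwarz_c1 Φ hΦ hΦ0 hΦlt
  have hC2 : ‖deriv (deriv Φ) 0‖ ≤ 2 := chebyshev_aux_schwarz_c2 Φ hΦ hΦ0 hΦlt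
  set c1 := deriv Φ 0
  set C2 := deriv (deriv Φ) 0
  have ht0 : (0:ℝ) < t := by linarith
  have key : iteratedDeriv 3 f 0 / 6 - (iteratedDeriv 2 f 0 / 2) ^ 2
      = ((t:ℂ) * C2 + ((t:ℂ)^2 - 1) * c1^2) / 3 := by
    rw [i2, i3]; ring
  rw [key]
  have habs : ‖(t:ℂ) * C2 + ((t:ℂ)^2 - 1) * c1^2‖
      ≤ t * 2 + (1 - t^2) * 1 := by
    calc ‖(t:ℂ) * C2 + ((t:ℂ)^2 - 1) * c1^2‖
        ≤ ‖(t:ℂ) * C2‖ + ‖((t:ℂ)^2 - 1) * c1^2‖ :=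
          norm_add_le _ _
    _ = t * ‖C2‖ + (1 - t^2) * ‖c1‖^2 := by
        rw [norm_mul, norm_mul, norm_pow]
        have h1 : ‖(t:ℂ)‖ = t := by
          rw [Complex.norm_real, Real.norm_eq_abs, abs_of_pos ht0]
        have h2 : ‖(t:ℂ)^2 - 1‖ = 1 - t^2 := by
          have : ((t:ℂ)^2 - 1) = ((t^2 - 1 : ℝ) : ℂ) := by push_cast; ring
          rw [this, Complex.norm_real, Real.norm_eq_abs, abs_of_neg (by nlinarith)]
          ring
        rw [h1, h2]
    _ ≤ t * 2 + (1 - t^2) * 1 := by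
        have h3 : ‖c1‖^2 ≤ 1 := by
          nlinarith [norm_nonneg c1]
        have h4 : (0:ℝ) ≤ 1 - t^2 := by nlinarith
        nlinarith [norm_nonneg C2]
  rw [norm_div]
  have h6 : ‖(3:ℂ)‖ = 3 := by simp
  rw [h6]
  rw [div_le_div_iff₀ (by norm_num) (by norm_num)]
  nlinarith
end

section
/- Let h₂, h₃ be real numbers with h₂ ≠ 0 and 6h₂² − 8h₃ ≠ 0, let η be a real number, and let a₂, a₃, p₁, p₂, q₁, q₂ be complex numbers satisfying 2a₂ = h₂ p₁, 3a₃ = h₂ p₂ + h₃ p₁², −2a₂ = h₂ q₁, and 3(2a₂² − a₃) = h₂ q₂ + h₃ q₁². Then a₃ − η a₂² = h₂ [ (Θ + 1/6) p₂ + (Θ − 1/6) q₂ ], where Θ = h₂² (1 − η)/(6h₂² − 8h₃). Consequently, if in addition |p₂| ≤ 1 and |q₂| ≤ 1, then |a₃ − η a₂²| ≤ |h₂|/3 when |Θ| ≤ 1/6, and |a₃ − η a₂²| ≤ 2|h₂| |Θ| when |Θ| ≥ 1/6. -/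
/-- **The Fekete–Szegő computation in the proof of Theorem 2.2.** Under the coefficient
relations (15)–(18), with `h₂ ≠ 0` and `6h₂² - 8h₃ ≠ 0`, one has
`a₃ - η a₂² = h₂ [(Θ + 1/6) p₂ + (Θ - 1/6) q₂]` where
`Θ = h₂² (1 - η)/(6h₂² - 8h₃)`; consequently, if `|p₂| ≤ 1` and `|q₂| ≤ 1`, then
`|a₃ - η a₂²| ≤ |h₂|/3` when `|Θ| ≤ 1/6`, and `|a₃ - η a₂²| ≤ 2|h₂||Θ|` when
`|Θ| ≥ 1/6`. -/
theorem fekete_szego_computation (h₂ h₃ η : ℝ) (a₂ a₃ p₁ p₂ q₁ q₂ : ℂ)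
    (hh₂ : h₂ ≠ 0) (hden : 6 * h₂ ^ 2 - 8 * h₃ ≠ 0)
    (e15 : 2 * a₂ = (h₂ : ℂ) * p₁)
    (e16 : 3 * a₃ = (h₂ : ℂ) * p₂ + (h₃ : ℂ) * p₁ ^ 2)
    (e17 : -2 * a₂ = (h₂ : ℂ) * q₁)
    (e18 : 3 * (2 * a₂ ^ 2 - a₃) = (h₂ : ℂ) * q₂ + (h₃ : ℂ) * q₁ ^ 2) :
    a₃ - (η : ℂ) * a₂ ^ 2 =
      (h₂ : ℂ) * ((((h₂ ^ 2 * (1 - η) / (6 * h₂ ^ 2 - 8 * h₃) : ℝ) : ℂ) + 1 / 6) * p₂ +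
        ((((h₂ ^ 2 * (1 - η) / (6 * h₂ ^ 2 - 8 * h₃) : ℝ) : ℂ) - 1 / 6) * q₂)) ∧
    (‖p₂‖ ≤ 1 → ‖q₂‖ ≤ 1 →
      ((|h₂ ^ 2 * (1 - η) / (6 * h₂ ^ 2 - 8 * h₃)| ≤ 1 / 6 →
          ‖a₃ - (η : ℂ) * a₂ ^ 2‖ ≤ |h₂| / 3) ∧
        (1 / 6 ≤ |h₂ ^ 2 * (1 - η) / (6 * h₂ ^ 2 - 8 * h₃)| →
          ‖a₃ - (η : ℂ) * a₂ ^ 2‖ ≤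
            2 * |h₂| * |h₂ ^ 2 * (1 - η) / (6 * h₂ ^ 2 - 8 * h₃)|))) := by
  set Θ : ℝ := h₂ ^ 2 * (1 - η) / (6 * h₂ ^ 2 - 8 * h₃) with hΘ
  have hh₂' : (h₂ : ℂ) ≠ 0 := by exact_mod_cast hh₂
  have hden' : (6 * (h₂:ℂ) ^ 2 - 8 * (h₃:ℂ)) ≠ 0 := by
    have := Complex.ofReal_ne_zero.mpr hden
    push_cast at this
    exact this
  -- q₁ = -p₁
  have hq1 : q₁ = -p₁ := by
    have : (h₂ : ℂ) * q₁ = (h₂ : ℂ) * (-p₁) := by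
      rw [← e17]; linear_combination -e15
    exact mul_left_cancel₀ hh₂' this
  have hp1sq : (h₂:ℂ) ^ 2 * p₁ ^ 2 = 4 * a₂ ^ 2 := by
    linear_combination (-2 * a₂ - (h₂:ℂ) * p₁) * e15
  -- key relations
  have hA : (6 * (h₂:ℂ) ^ 2 - 8 * (h₃:ℂ)) * a₂ ^ 2 = (h₂:ℂ) ^ 3 * (p₂ + q₂) := by
    subst hq1
    linear_combination (h₂:ℂ) ^ 2 * e16 + (h₂:ℂ) ^ 2 * e18 + 2 * (h₃:ℂ) * hp1sq
  have hB : 6 * a₃ - 6 * a₂ ^ 2 = (h₂:ℂ) * (p₂ - q₂) := by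
    subst hq1
    linear_combination e16 - e18
  have hc : ((Θ:ℝ):ℂ) * (6 * (h₂:ℂ) ^ 2 - 8 * (h₃:ℂ)) = (h₂:ℂ) ^ 2 * (1 - (η:ℂ)) := by
    rw [hΘ]; push_cast; exact div_mul_cancel₀ _ hden'
  have hA2 : (1 - (η:ℂ)) * a₂ ^ 2 = ((Θ:ℝ):ℂ) * (h₂:ℂ) * (p₂ + q₂) := by
    apply mul_left_cancel₀ hden'
    linear_combination (1 - (η:ℂ)) * hA - (h₂:ℂ) * (p₂ + q₂) * hc
  have hid : a₃ - (η : ℂ) * a₂ ^ 2 =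
      (h₂ : ℂ) * (((Θ : ℝ) : ℂ) + 1 / 6) * p₂ + (h₂ : ℂ) * ((((Θ : ℝ) : ℂ)) - 1 / 6) * q₂ := by
    linear_combination hA2 + (1 / 6) * hB
  constructor
  · rw [hid]; ring
  · intro hp hq
    have habs : ‖a₃ - (η : ℂ) * a₂ ^ 2‖ ≤ |h₂| * (|Θ + 1/6| + |Θ - 1/6|) := by
      rw [hid]
      refine (norm_add_le _ _).trans ?_
      have h1 : ‖(h₂ : ℂ) * (((Θ : ℝ) : ℂ) + 1 / 6) * p₂‖ ≤ |h₂| * |Θ + 1/6| := by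
        rw [norm_mul, norm_mul]
        have e1 : ‖(h₂ : ℂ)‖ = |h₂| := (Complex.norm_real _).trans (Real.norm_eq_abs _)
        have e2 : ‖((Θ : ℝ) : ℂ) + 1 / 6‖ = |Θ + 1/6| := by
          rw [show ((Θ : ℝ) : ℂ) + 1/6 = ((Θ + 1/6 : ℝ) : ℂ) by push_cast; ring]
          exact (Complex.norm_real _).trans (Real.norm_eq_abs _)
        rw [e1, e2]
        calc |h₂| * |Θ + 1/6| * ‖p₂‖ ≤ |h₂| * |Θ + 1/6| * 1 := by
              apply mul_le_mul_of_nonneg_left hp (by positivity)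
          _ = |h₂| * |Θ + 1/6| := by ring
      have h2 : ‖(h₂ : ℂ) * (((Θ : ℝ) : ℂ) - 1 / 6) * q₂‖ ≤ |h₂| * |Θ - 1/6| := by
        rw [norm_mul, norm_mul]
        have e1 : ‖(h₂ : ℂ)‖ = |h₂| := (Complex.norm_real _).trans (Real.norm_eq_abs _)
        have e2 : ‖((Θ : ℝ) : ℂ) - 1 / 6‖ = |Θ - 1/6| := by
          rw [show ((Θ : ℝ) : ℂ) - 1/6 = ((Θ - 1/6 : ℝ) : ℂ) by push_cast; ring]
          exact (Complex.norm_real _).trans (Real.norm_eq_abs _)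
        rw [e1, e2]
        calc |h₂| * |Θ - 1/6| * ‖q₂‖ ≤ |h₂| * |Θ - 1/6| * 1 := by
              apply mul_le_mul_of_nonneg_left hq (by positivity)
          _ = |h₂| * |Θ - 1/6| := by ring
      linarith
    constructor
    · intro hsmall
      have : |Θ + 1/6| + |Θ - 1/6| = 1/3 := by
        rw [abs_le] at hsmall
        rw [abs_of_nonneg (by linarith), abs_of_nonpos (by linarith)]
        ring
      calc ‖a₃ - (η : ℂ) * a₂ ^ 2‖ ≤ |h₂| * (|Θ + 1/6| + |Θ - 1/6|) := habs
        _ = |h₂| / 3 := by rw [this]; ring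
    · intro hbig
      have : |Θ + 1/6| + |Θ - 1/6| = 2 * |Θ| := by
        rcases abs_cases Θ with ⟨h, _⟩ | ⟨h, _⟩
        · rw [h] at hbig
          rw [abs_of_nonneg (by linarith), abs_of_nonneg (by linarith), h]; ring
        · rw [h] at hbig
          rw [abs_of_nonpos (by linarith), abs_of_nonpos (by linarith), h]; ring
      calc ‖a₃ - (η : ℂ) * a₂ ^ 2‖ ≤ |h₂| * (|Θ + 1/6| + |Θ - 1/6|) := habs
        _ = 2 * |h₂| * |Θ| := by rw [this]; ring
end

section
/- Let a, b, p, q, x be real numbers with b x ≠ 0 and b x²(3b − 4p) − 4 a q ≠ 0, set h₂ = b x and h₃ = p b x² + a q, and let a₂, a₃, p₁, p₂, q₁, q₂ be complex numbers with |p₁| ≤ 1, |p₂| ≤ 1, |q₁| ≤ 1, |q₂| ≤ 1 satisfying 2a₂ = h₂ p₁, 3a₃ = h₂ p₂ + h₃ p₁², −2a₂ = h₂ q₁, and 3(2a₂² − a₃) = h₂ q₂ + h₃ q₁². Then |a₂| ≤ (|b x| · √|b x|) / √|b x²(3b − 4p) − 4 a q| and |a₃| ≤ |b x|/3 + (b x)²/4.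 -/
/-- **Theorem 2.2 in coefficient-inequality form.** If `b x ≠ 0`,
`b x²(3b - 4p) - 4 a q ≠ 0`, `h₂ = b x`, `h₃ = p b x² + a q`, the Schwarz coefficients
`p₁, p₂, q₁, q₂` have modulus at most `1`, and the coefficient comparisons (15)–(18)
hold, then `|a₂| ≤ |b x| √|b x| / √|b x²(3b - 4p) - 4 a q|` and
`|a₃| ≤ |b x|/3 + (b x)²/4`. -/
theorem coefficient_bounds_of_relations (a b p q x : ℝ) (a₂ a₃ p₁ p₂ q₁ q₂ : ℂ)
    (hbx : b * x ≠ 0) (hne : b * x ^ 2 * (3 * b - 4 * p) - 4 * a * q ≠ 0)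
    (hp₁ : ‖p₁‖ ≤ 1) (hp₂ : ‖p₂‖ ≤ 1)
    (hq₁ : ‖q₁‖ ≤ 1) (hq₂ : ‖q₂‖ ≤ 1)
    (e15 : 2 * a₂ = ((b * x : ℝ) : ℂ) * p₁)
    (e16 : 3 * a₃ = ((b * x : ℝ) : ℂ) * p₂ + ((p * b * x ^ 2 + q * a : ℝ) : ℂ) * p₁ ^ 2)
    (e17 : -2 * a₂ = ((b * x : ℝ) : ℂ) * q₁)
    (e18 : 3 * (2 * a₂ ^ 2 - a₃) =
      ((b * x : ℝ) : ℂ) * q₂ + ((p * b * x ^ 2 + q * a : ℝ) : ℂ) * q₁ ^ 2) :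
    ‖a₂‖ ≤
        (|b * x| * Real.sqrt |b * x|) / Real.sqrt |b * x ^ 2 * (3 * b - 4 * p) - 4 * a * q| ∧
      ‖a₃‖ ≤ |b * x| / 3 + (b * x) ^ 2 / 4 := by
  have hHne : ((b * x : ℝ) : ℂ) ≠ 0 := Complex.ofReal_ne_zero.mpr hbx
  have hq1 : q₁ = -p₁ := by
    have h0 : ((b * x : ℝ) : ℂ) * q₁ = ((b * x : ℝ) : ℂ) * (-p₁) := by
      linear_combination -e17 - e15
    exact mul_left_cancel₀ hHne h0
  rw [hq1] at e18
  have key2 : a₂ ^ 2 * (2 * ((b * x ^ 2 * (3 * b - 4 * p) - 4 * a * q : ℝ) : ℂ)) =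
      ((b * x : ℝ) : ℂ) ^ 3 * (p₂ + q₂) := by
    push_cast at e15 e16 e18 ⊢
    linear_combination ((b:ℂ) * x)^2 * e16 + ((b:ℂ)*x)^2 * e18 -
      2 * ((p:ℂ)*b*x^2 + q*a) * (2*a₂ + (b:ℂ)*x*p₁) * e15
  have key3 : 12 * a₃ = 3 * ((b * x : ℝ) : ℂ) ^ 2 * p₁ ^ 2 +
      2 * ((b * x : ℝ) : ℂ) * (p₂ - q₂) := by
    linear_combination 2 * e16 - 2 * e18 + 3 * (2*a₂ + ((b * x : ℝ) : ℂ)*p₁) * e15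
  have hDpos : (0:ℝ) < |b * x ^ 2 * (3 * b - 4 * p) - 4 * a * q| := abs_pos.mpr hne
  have hHpos : (0:ℝ) < |b * x| := abs_pos.mpr hbx
  constructor
  · have habs2 : (‖a₂‖) ^ 2 * (2 * |b * x ^ 2 * (3 * b - 4 * p) - 4 * a * q|) =
        |b * x| ^ 3 * ‖p₂ + q₂‖ := by
      have h := congrArg (‖·‖) key2
      simp only [norm_mul, norm_pow, Complex.norm_real, Real.norm_eq_abs, Complex.norm_two] at h
      rwa [abs_mul]
    have hsum : ‖p₂ + q₂‖ ≤ 2 := by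
      calc ‖p₂ + q₂‖ ≤ ‖p₂‖ + ‖q₂‖ := norm_add_le _ _
        _ ≤ 2 := by linarith
    have hsq : (‖a₂‖) ^ 2 ≤ |b * x| ^ 3 / |b * x ^ 2 * (3 * b - 4 * p) - 4 * a * q| := by
      rw [le_div_iff₀ hDpos]
      nlinarith [pow_pos hHpos 3, sq_nonneg (‖a₂‖)]
    have hRHS : ((|b * x| * Real.sqrt |b * x|) /
        Real.sqrt |b * x ^ 2 * (3 * b - 4 * p) - 4 * a * q|) ^ 2 =
        |b * x| ^ 3 / |b * x ^ 2 * (3 * b - 4 * p) - 4 * a * q| := by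
      rw [div_pow, mul_pow, Real.sq_sqrt (abs_nonneg _), Real.sq_sqrt (abs_nonneg _)]
      ring
    have hRHSnn : 0 ≤ (|b * x| * Real.sqrt |b * x|) /
        Real.sqrt |b * x ^ 2 * (3 * b - 4 * p) - 4 * a * q| := by positivity
    calc ‖a₂‖ = Real.sqrt ((‖a₂‖) ^ 2) := by
          rw [Real.sqrt_sq (norm_nonneg _)]
      _ ≤ Real.sqrt (((|b * x| * Real.sqrt |b * x|) /
          Real.sqrt |b * x ^ 2 * (3 * b - 4 * p) - 4 * a * q|) ^ 2) := by
          apply Real.sqrt_le_sqrt; rw [hRHS]; exact hsq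
      _ = _ := Real.sqrt_sq hRHSnn
  · have hb1 : (‖p₁‖) ^ 2 ≤ 1 := by nlinarith [norm_nonneg p₁]
    have hb2 : ‖p₂ - q₂‖ ≤ 2 := by
      have := norm_add_le p₂ (-q₂)
      simp only [norm_neg] at this
      calc ‖p₂ - q₂‖ = ‖p₂ + -q₂‖ := by ring_nf
        _ ≤ ‖p₂‖ + ‖q₂‖ := this
        _ ≤ 2 := by linarith
    have h := congrArg (‖·‖) key3
    have hL : ‖12 * a₃‖ = 12 * ‖a₃‖ := by
      rw [norm_mul]; norm_num
    rw [hL] at h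
    have hR : ‖3 * ((b * x : ℝ) : ℂ) ^ 2 * p₁ ^ 2 +
        2 * ((b * x : ℝ) : ℂ) * (p₂ - q₂)‖ ≤ 3 * |b * x| ^ 2 + 4 * |b * x| := by
      calc ‖3 * ((b * x : ℝ) : ℂ) ^ 2 * p₁ ^ 2 +
            2 * ((b * x : ℝ) : ℂ) * (p₂ - q₂)‖
          ≤ ‖3 * ((b * x : ℝ) : ℂ) ^ 2 * p₁ ^ 2‖ +
            ‖2 * ((b * x : ℝ) : ℂ) * (p₂ - q₂)‖ := norm_add_le _ _
        _ = 3 * |b * x| ^ 2 * (‖p₁‖) ^ 2 +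
            2 * |b * x| * ‖p₂ - q₂‖ := by
            simp only [norm_mul, norm_pow, Complex.norm_real, Real.norm_eq_abs]
            norm_num
        _ ≤ 3 * |b * x| ^ 2 * 1 + 2 * |b * x| * 2 := by
            have h1 : 3 * |b * x| ^ 2 * (‖p₁‖) ^ 2 ≤ 3 * |b * x| ^ 2 * 1 := by
              apply mul_le_mul_of_nonneg_left hb1; positivity
            have h2 : 2 * |b * x| * ‖p₂ - q₂‖ ≤ 2 * |b * x| * 2 := by
              apply mul_le_mul_of_nonneg_left hb2; positivity
            linarith
        _ = 3 * |b * x| ^ 2 + 4 * |b * x| := by ring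
    have hfin : 12 * ‖a₃‖ ≤ 3 * |b * x| ^ 2 + 4 * |b * x| := h ▸ hR
    have hsq : (b * x) ^ 2 = |b * x| ^ 2 := (sq_abs _).symm
    rw [hsq]
    linarith
end
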